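/- arXiv:1104.1906 — 6 statements merged into one kernel-verified Lean document; each statement's English description precedes it below -/
import Mathlib

section
/- Let g_1,…,g_r be polynomials with integer coefficients and let m = lcm(m_1,…,m_r). Then (1/m)·Σ_{k=1}^{m} c_{m_1}(g_1(k))···c_{m_r}(g_r(k)) = Σ_{d_1|m_1,…,d_r|m_r} [d_1 μ(m_1/d_1)···d_r μ(m_r/d_r) / lcm(d_1,…,d_r)] · N_G(d_1,…,d_r), where N_G(d_1,…,d_r) is the number of x mod lcm(d_1,…,d_r) with g_i(x) ≡ 0 (mod d_i) for all i. -/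
open Finset ArithmeticFunction

/-- The Ramanujan sum `c_n(k) = ∑_{d ∣ gcd(k,n)} d · μ(n/d)`, for integer `k`. -/
def ramanujanSum (n : ℕ) (k : ℤ) : ℤ :=
  ∑ d ∈ (Int.gcd k n).divisors, (d : ℤ) * moebius (n / d)

/-- `N_G(d₁,…,d_r)`: the number of `x` mod `lcm(d₁,…,d_r)` with `gᵢ(x) ≡ 0 (mod dᵢ)` for all `i`. -/
def NG {r : ℕ} (g : Fin r → Polynomial ℤ) (d : Fin r → ℕ) : ℕ :=
  ((Finset.range (Finset.univ.lcm d)).filter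
    (fun x : ℕ => ∀ i, (d i : ℤ) ∣ (g i).eval (x : ℤ))).card

lemma rs_eq (n : ℕ) (hn : n ≠ 0) (k : ℤ) :
    ramanujanSum n k = ∑ e ∈ n.divisors, if (e : ℤ) ∣ k then (e : ℤ) * moebius (n / e) else 0 := by
  rw [ramanujanSum, ← Finset.sum_filter]
  apply Finset.sum_congr _ fun _ _ => rfl
  ext e
  rw [Nat.mem_divisors, Finset.mem_filter, Nat.mem_divisors]
  have hg : Int.gcd k n = Nat.gcd k.natAbs n := by simp [Int.gcd]
  rw [hg, Nat.dvd_gcd_iff]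
  have hek : e ∣ k.natAbs ↔ (e : ℤ) ∣ k := by
    simpa using (@Int.natAbs_dvd_natAbs (e : ℤ) k)
  constructor
  · rintro ⟨⟨h1, h2⟩, -⟩; exact ⟨⟨h2, hn⟩, hek.mp h1⟩
  · rintro ⟨⟨h2, -⟩, h1⟩
    refine ⟨⟨hek.mpr h1, h2⟩, ?_⟩
    simp [Nat.gcd_eq_zero_iff, hn]

lemma rs_eq_q (n : ℕ) (hn : n ≠ 0) (k : ℤ) :
    (ramanujanSum n k : ℚ) =
      ∑ e ∈ n.divisors, if (e : ℤ) ∣ k then (e : ℚ) * (moebius (n / e) : ℚ) else 0 := by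
  rw [rs_eq n hn k, Int.cast_sum]
  exact Finset.sum_congr rfl fun e _ => by split_ifs <;> push_cast <;> ring

section count

variable {r : ℕ} (g : Fin r → Polynomial ℤ) (d : Fin r → ℕ)

lemma per_base (a b : ℕ) (hb : Finset.univ.lcm d ∣ b) :
    (∀ i, (d i : ℤ) ∣ (g i).eval ((a + b : ℕ) : ℤ)) ↔
      (∀ i, (d i : ℤ) ∣ (g i).eval (a : ℤ)) := by
  refine forall_congr' fun i => ?_
  have hdb : (d i : ℤ) ∣ ((a + b : ℕ) : ℤ) - (a : ℤ) := by
    push_cast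
    have : (d i : ℤ) ∣ (b : ℤ) :=
      Int.natCast_dvd_natCast.mpr ((Finset.dvd_lcm (Finset.mem_univ i)).trans hb)
    simpa using this
  have key : (d i : ℤ) ∣ (g i).eval ((a + b : ℕ) : ℤ) - (g i).eval (a : ℤ) :=
    hdb.trans (Polynomial.sub_dvd_eval_sub _ _ _)
  constructor
  · intro h; simpa using h.sub key
  · intro h; simpa using key.add h

lemma filter_Icc_card (M : ℕ) (hM : M ≠ 0) (p : ℕ → Prop) [DecidablePred p]
    (hp : ∀ a, p (a + M) ↔ p a) :
    ((Icc 1 M).filter p).card = ((range M).filter p).card := by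
  apply Finset.card_nbij' (fun k => k % M) (fun k => if k = 0 then M else k)
  · intro a ha
    simp only [Finset.mem_coe, mem_filter, mem_Icc, mem_range] at ha ⊢
    refine ⟨Nat.mod_lt _ (Nat.pos_of_ne_zero hM), ?_⟩
    rcases eq_or_lt_of_le ha.1.2 with h | h
    · subst h
      rw [Nat.mod_self]
      exact (hp 0).mp (by simpa using ha.2)
    · rw [Nat.mod_eq_of_lt h]; exact ha.2
  · intro a ha
    simp only [Finset.mem_coe, mem_filter, mem_range, mem_Icc] at ha ⊢
    split_ifs with h
    · subst h
      exact ⟨⟨Nat.one_le_iff_ne_zero.mpr hM, le_rfl⟩, by simpa using (hp 0).mpr ha.2⟩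
    · exact ⟨⟨Nat.one_le_iff_ne_zero.mpr h, ha.1.le⟩, ha.2⟩
  · intro a ha
    simp only [Finset.mem_coe, mem_filter, mem_Icc] at ha
    rcases eq_or_lt_of_le ha.1.2 with h | h
    · subst h; simp
    · dsimp only; rw [Nat.mod_eq_of_lt h]
      simp [Nat.one_le_iff_ne_zero.mp ha.1.1]
  · intro a ha
    simp only [Finset.mem_coe, mem_filter, mem_range] at ha
    dsimp only; split_ifs with h
    · simp [h]
    · rw [Nat.mod_eq_of_lt ha.1]

lemma per_iter (L : ℕ) (p : ℕ → Prop) (hp : ∀ a, p (a + L) ↔ p a) (a n : ℕ) :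
    p (a + n * L) ↔ p a := by
  induction n with
  | zero => simp
  | succ n ih => rw [Nat.succ_mul, ← add_assoc, hp, ih]

lemma filter_range_mul (L n : ℕ) (p : ℕ → Prop) [DecidablePred p]
    (hp : ∀ a, p (a + L) ↔ p a) :
    ((range (n * L)).filter p).card = n * ((range L).filter p).card := by
  induction n with
  | zero => simp
  | succ n ih =>
    have h2 : ∀ x ∈ range L, (if p (n * L + x) then 1 else 0) = if p x then 1 else 0 := by
      intro x _
      have : p (n * L + x) ↔ p x := by rw [add_comm]; exact per_iter L p hp x n
      simp [this]
    rw [Nat.succ_mul, Finset.card_filter, Finset.sum_range_add, Finset.sum_congr rfl h2,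
      ← Finset.card_filter, ← Finset.card_filter, ih]
    ring

lemma count_eq (M : ℕ) (hM : M ≠ 0) (hd0 : ∀ i, d i ≠ 0) (hdM : ∀ i, d i ∣ M) :
    ((Icc 1 M).filter (fun k : ℕ => ∀ i, (d i : ℤ) ∣ (g i).eval (k : ℤ))).card =
      (M / Finset.univ.lcm d) * NG g d := by
  set L := Finset.univ.lcm d with hLdef
  have hLM : L ∣ M := Finset.lcm_dvd fun i _ => hdM i
  set p : ℕ → Prop := fun k : ℕ => ∀ i, (d i : ℤ) ∣ (g i).eval (k : ℤ) with hpdef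
  have hpL : ∀ a, p (a + L) ↔ p a := fun a => per_base g d a L dvd_rfl
  have hpM : ∀ a, p (a + M) ↔ p a := fun a => per_base g d a M hLM
  rw [filter_Icc_card M hM p hpM]
  have hML : M = (M / L) * L := (Nat.div_mul_cancel hLM).symm
  conv_lhs => rw [hML]
  rw [filter_range_mul L (M / L) p hpL]
  rfl

end count

theorem eval_E_G {r : ℕ} (g : Fin r → Polynomial ℤ) (m : Fin r → ℕ)
    (hm : ∀ i, 0 < m i) :
    (1 / ((Finset.univ.lcm m : ℕ) : ℚ)) *
      ∑ k ∈ Icc 1 (Finset.univ.lcm m),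
        ∏ i, (ramanujanSum (m i) ((g i).eval (k : ℤ)) : ℚ) =
    ∑ d ∈ Fintype.piFinset (fun i => (m i).divisors),
      (∏ i, (d i : ℚ) * (moebius (m i / d i) : ℚ)) / ((Finset.univ.lcm d : ℕ) : ℚ) *
        (NG g d : ℚ) := by
  set M := Finset.univ.lcm m with hMdef
  have hM : M ≠ 0 := by
    simp only [hMdef, Ne, Finset.lcm_eq_zero_iff]
    intro h
    simp only [Set.mem_image, Finset.mem_coe, Finset.mem_univ, true_and] at h
    obtain ⟨i, hi⟩ := h
    exact (hm i).ne' hi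
  have hsum : (∑ k ∈ Icc 1 M, ∏ i, (ramanujanSum (m i) ((g i).eval (k : ℤ)) : ℚ)) =
      ∑ d ∈ Fintype.piFinset (fun i => (m i).divisors),
        (∏ i, (d i : ℚ) * (moebius (m i / d i) : ℚ)) *
          (((M / Finset.univ.lcm d) * NG g d : ℕ) : ℚ) := by
    have step1 : ∀ k ∈ Icc 1 M,
        (∏ i, (ramanujanSum (m i) ((g i).eval (k : ℤ)) : ℚ)) =
        ∑ d ∈ Fintype.piFinset (fun i => (m i).divisors),
          ∏ i, (if (d i : ℤ) ∣ (g i).eval (k : ℤ)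
            then (d i : ℚ) * (moebius (m i / d i) : ℚ) else 0) := by
      intro k _
      calc (∏ i, (ramanujanSum (m i) ((g i).eval (k : ℤ)) : ℚ))
          = ∏ i, ∑ e ∈ (m i).divisors,
              (if (e : ℤ) ∣ (g i).eval (k : ℤ) then (e : ℚ) * (moebius (m i / e) : ℚ) else 0) :=
            Finset.prod_congr rfl fun i _ => rs_eq_q (m i) (hm i).ne' _
        _ = _ := Finset.prod_univ_sum _ _
    rw [Finset.sum_congr rfl step1, Finset.sum_comm]
    refine Finset.sum_congr rfl fun d hd => ?_
    have hd' : ∀ i, d i ∈ (m i).divisors := by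
      simpa [Fintype.mem_piFinset] using hd
    have hd0 : ∀ i, d i ≠ 0 := fun i => (Nat.pos_of_mem_divisors (hd' i)).ne'
    have hdM : ∀ i, d i ∣ M :=
      fun i => ((Nat.mem_divisors.mp (hd' i)).1).trans (Finset.dvd_lcm (Finset.mem_univ i))
    have h2 : ∀ x ∈ Icc 1 M,
        (∏ i, (if (d i : ℤ) ∣ (g i).eval (x : ℤ)
          then (d i : ℚ) * (moebius (m i / d i) : ℚ) else 0)) =
        if (∀ i, (d i : ℤ) ∣ (g i).eval (x : ℤ))
          then ∏ i, (d i : ℚ) * (moebius (m i / d i) : ℚ) else 0 := by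
      intro x _
      rw [Finset.prod_ite_zero]
      simp
    rw [Finset.sum_congr rfl h2, ← Finset.sum_filter, Finset.sum_const, nsmul_eq_mul,
      count_eq g d M hM hd0 hdM, mul_comm]
  rw [hsum, Finset.mul_sum]
  refine Finset.sum_congr rfl fun d hd => ?_
  have hd' : ∀ i, d i ∈ (m i).divisors := by
    simpa [Fintype.mem_piFinset] using hd
  have hd0 : ∀ i, d i ≠ 0 := fun i => (Nat.pos_of_mem_divisors (hd' i)).ne'
  have hdM : ∀ i, d i ∣ M :=
    fun i => ((Nat.mem_divisors.mp (hd' i)).1).trans (Finset.dvd_lcm (Finset.mem_univ i))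
  have hLM : Finset.univ.lcm d ∣ M := Finset.lcm_dvd fun i _ => hdM i
  have hL : (Finset.univ.lcm d) ≠ 0 := fun h => hM (Nat.eq_zero_of_zero_dvd (h ▸ hLM))
  have hLq : ((Finset.univ.lcm d : ℕ) : ℚ) ≠ 0 := Nat.cast_ne_zero.mpr hL
  have hMq : ((M : ℕ) : ℚ) ≠ 0 := Nat.cast_ne_zero.mpr hM
  rw [Nat.cast_mul, Nat.cast_div hLM hLq]
  field_simp
end

section
/- For positive integers m_1, m_2 with m = lcm(m_1, m_2), and integers a_1, a_2 with |a_1 − a_2| = 1: (1/m)·Σ_{k=1}^{m} c_{m_1}(k−a_1)·c_{m_2}(k−a_2) equals (−1)^{ω(m)} if m_1 = m_2 = m and m is squarefree, and 0 otherwise; here ω(m) is the number of distinct prime factors of m. -/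
open Finset ArithmeticFunction
open scoped ArithmeticFunction.Moebius ArithmeticFunction.zeta ArithmeticFunction.omega ArithmeticFunction.Omega

lemma ramanujanSum_eq (n : ℕ) (hn : n ≠ 0) (k : ℤ) :
    ramanujanSum n k = ∑ d ∈ n.divisors, if (d:ℤ) ∣ k then (d : ℤ) * μ (n / d) else 0 := by
  rw [ramanujanSum, ← Finset.sum_filter]
  congr 1
  ext d
  simp only [Nat.mem_divisors, Finset.mem_filter]
  constructor
  · intro ⟨h1, h2⟩
    have hd : (d:ℤ) ∣ Int.gcd k n := Int.natCast_dvd_natCast.mpr h1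
    exact ⟨⟨Int.ofNat_dvd.mp (hd.trans (Int.gcd_dvd_right _ _)) , hn⟩,
      hd.trans (Int.gcd_dvd_left _ _)⟩
  · intro ⟨⟨h1, _⟩, h2⟩
    refine ⟨Int.ofNat_dvd.mp (Int.dvd_coe_gcd h2 (Int.natCast_dvd_natCast.mpr h1)), ?_⟩
    simp [Int.gcd_eq_zero_iff, hn]

lemma count_cong (D : ℕ) (hD : 0 < D) (r : ℤ) (t : ℕ) :
    ((Icc 1 (D * t)).filter (fun k : ℕ => (D:ℤ) ∣ (k:ℤ) - r)).card = t := by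
  induction t with
  | zero => simp
  | succ t ih =>
    have hsplit : Icc 1 (D * (t+1)) = Icc 1 (D*t) ∪ Ioc (D*t) (D*(t+1)) := by
      ext x; simp only [Finset.mem_Icc, Finset.mem_union, Finset.mem_Ioc]
      have : D * (t+1) = D*t + D := by ring
      omega
    rw [hsplit, Finset.filter_union, Finset.card_union_of_disjoint, ih]
    · have key : (Ioc (D*t) (D*(t+1))).filter (fun k : ℕ => (D:ℤ) ∣ (k:ℤ) - r) =
          {D*t + ((r-1).emod D).toNat + 1} := by
        have hD' : (0:ℤ) < D := by exact_mod_cast hD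
        have hem : (0:ℤ) ≤ (r-1).emod D := Int.emod_nonneg _ hD'.ne'
        have hem2 : (r-1).emod D < D := Int.emod_lt_of_pos _ hD'
        set s : ℕ := ((r-1).emod D).toNat with hs
        have hsc : (s:ℤ) = (r-1).emod D := Int.toNat_of_nonneg hem
        have hsD : s < D := by omega
        have hdvd0 : (D:ℤ) ∣ (r - 1) - s := by
          rw [hsc]; exact Int.dvd_self_sub_of_emod_eq rfl
        ext x
        simp only [Finset.mem_filter, Finset.mem_Ioc, Finset.mem_singleton]
        constructor
        · rintro ⟨⟨hx1, hx2⟩, hx3⟩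
          -- D ∣ x - r and D ∣ (Dt+s+1) - r, so D ∣ x - (Dt+s+1)
          have h4 : (D:ℤ) ∣ ((D*t + s + 1 : ℕ) : ℤ) - r := by
            push_cast
            have : ((D:ℤ)*t + s + 1) - r = (D:ℤ)*t - ((r-1) - s) := by ring
            rw [this]
            exact dvd_sub (Dvd.intro t rfl) hdvd0
          have h5 : (D:ℤ) ∣ (x:ℤ) - ((D*t + s + 1 : ℕ) : ℤ) := by
            have := dvd_sub hx3 h4
            simpa using this
          have h6 : ((x:ℤ) - ((D*t + s + 1 : ℕ) : ℤ)) = 0 := by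
            rcases h5 with ⟨c, hc⟩
            have hDt : D * (t+1) = D*t + D := by ring
            have hx2' : (x:ℤ) ≤ (D:ℤ)*t + D := by push_cast at hx2 ⊢; omega
            have hx1' : ((D:ℤ)*t) < x := by exact_mod_cast hx1
            have hcb : -(D:ℤ) < (D:ℤ)*c ∧ (D:ℤ)*c < D := by
              push_cast at hc ⊢; constructor <;> nlinarith [hs ▸ hsc]
            have : c = 0 := by
              rcases hcb with ⟨h7, h8⟩
              by_contra hc0
              rcases lt_or_gt_of_ne hc0 with h | h
              · nlinarith
              · nlinarith
            rw [this, mul_zero] at hc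
            push_cast at hc ⊢; linarith
          omega
        · rintro rfl
          refine ⟨⟨by omega, by rw [Nat.mul_succ]; omega⟩, ?_⟩
          push_cast
          have : ((D:ℤ)*t + s + 1) - r = (D:ℤ)*t - ((r-1) - s) := by ring
          rw [this]
          exact dvd_sub (Dvd.intro t rfl) hdvd0
      rw [key]; simp
    · exact Finset.disjoint_filter_filter (by
        simp only [Finset.disjoint_left, Finset.mem_Icc, Finset.mem_Ioc]
        intro a h1 h2; omega)

lemma count_cong' (D : ℕ) (hD : 0 < D) (r : ℤ) (m : ℕ) (hDm : D ∣ m) :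
    ((Icc 1 m).filter (fun k : ℕ => (D:ℤ) ∣ (k:ℤ) - r)).card = m / D := by
  obtain ⟨t, rfl⟩ := hDm
  rw [Nat.mul_div_cancel_left _ hD]
  exact count_cong D hD r t

lemma count_two (m d₁ d₂ : ℕ) (hd₁ : 0 < d₁) (hd₂ : 0 < d₂) (h₁ : d₁ ∣ m) (h₂ : d₂ ∣ m)
    (a₁ a₂ : ℤ) (ha : |a₁ - a₂| = 1) :
    ((Icc 1 m).filter (fun k : ℕ => (d₁:ℤ) ∣ (k:ℤ) - a₁ ∧ (d₂:ℤ) ∣ (k:ℤ) - a₂)).card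
    = if Nat.gcd d₁ d₂ = 1 then m / (d₁ * d₂) else 0 := by
  split_ifs with hg
  · -- coprime case
    have hcop : IsCoprime (d₁:ℤ) (d₂:ℤ) := by
      rw [Int.isCoprime_iff_gcd_eq_one]; simpa [Int.gcd_natCast_natCast] using hg
    obtain ⟨u, v, huv⟩ := hcop
    -- CRT witness
    set r : ℤ := a₁ * (v * d₂) + a₂ * (u * d₁) with hr
    have hr₁ : (d₁:ℤ) ∣ r - a₁ := by
      have : r - a₁ = (d₁:ℤ) * (u * (a₂ - a₁)) := by
        have h1 : a₁ * (v * d₂) = a₁ * (1 - u * d₁) := by rw [← huv]; ring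
        rw [hr, h1]; ring
      exact ⟨_, this⟩
    have hr₂ : (d₂:ℤ) ∣ r - a₂ := by
      have : r - a₂ = (d₂:ℤ) * (v * (a₁ - a₂)) := by
        have h1 : a₂ * (u * d₁) = a₂ * (1 - v * d₂) := by rw [← huv]; ring
        rw [hr, h1]; ring
      exact ⟨_, this⟩
    have hiff : ∀ k : ℕ, ((d₁:ℤ) ∣ (k:ℤ) - a₁ ∧ (d₂:ℤ) ∣ (k:ℤ) - a₂) ↔
        ((d₁ * d₂ : ℕ):ℤ) ∣ (k:ℤ) - r := by
      intro k
      constructor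
      · rintro ⟨hk1, hk2⟩
        push_cast
        have hcop : IsCoprime (d₁:ℤ) (d₂:ℤ) := ⟨u, v, huv⟩
        refine hcop.mul_dvd ?_ ?_
        · have := dvd_sub hk1 hr₁; simpa using this
        · have := dvd_sub hk2 hr₂; simpa using this
      · intro hk
        push_cast at hk
        constructor
        · have h1 : (d₁:ℤ) ∣ (k:ℤ) - r := dvd_trans ⟨d₂, by push_cast; ring⟩ hk
          have := dvd_add h1 hr₁; simpa using this
        · have h2 : (d₂:ℤ) ∣ (k:ℤ) - r := dvd_trans ⟨d₁, by push_cast; ring⟩ hk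
          have := dvd_add h2 hr₂; simpa using this
    rw [Finset.filter_congr (fun k _ => by rw [hiff k])]
    exact count_cong' (d₁*d₂) (by positivity) r m (Nat.Coprime.mul_dvd_of_dvd_of_dvd hg h₁ h₂)
  · -- non-coprime: empty
    rw [Finset.card_eq_zero, Finset.filter_eq_empty_iff]
    rintro k - ⟨hk1, hk2⟩
    apply hg
    have hgd : ((Nat.gcd d₁ d₂ : ℕ):ℤ) ∣ a₁ - a₂ := by
      have h1 : ((Nat.gcd d₁ d₂ : ℕ):ℤ) ∣ (k:ℤ) - a₁ :=
        dvd_trans (Int.natCast_dvd_natCast.mpr (Nat.gcd_dvd_left _ _)) hk1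
      have h2 : ((Nat.gcd d₁ d₂ : ℕ):ℤ) ∣ (k:ℤ) - a₂ :=
        dvd_trans (Int.natCast_dvd_natCast.mpr (Nat.gcd_dvd_right _ _)) hk2
      have := dvd_sub h2 h1; simpa using this
    have : Nat.gcd d₁ d₂ ∣ (a₁ - a₂).natAbs := by
      have := Int.natAbs_dvd_natAbs.mpr hgd
      simpa using this
    rw [Int.abs_eq_natAbs] at ha
    have hna : (a₁ - a₂).natAbs = 1 := by exact_mod_cast ha
    rw [hna] at this
    exact Nat.dvd_one.mp this

lemma sum_moebius_divisors (n : ℕ) :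
    (∑ t ∈ n.divisors, (μ t : ℤ)) = if n = 1 then 1 else 0 := by
  trans ((μ * ζ : ArithmeticFunction ℤ) n)
  · rw [coe_mul_zeta_apply]
  · rw [moebius_mul_coe_zeta, one_apply]

lemma sum_moebius_div_filter (n t : ℕ) (hn : n ≠ 0) (ht : t ∣ n) :
    (∑ d ∈ n.divisors.filter (t ∣ ·), (μ (n / d) : ℤ)) = if n = t then 1 else 0 := by
  have ht0 : t ≠ 0 := fun h => hn (by simpa [h] using ht)
  have key : ∑ d ∈ n.divisors.filter (t ∣ ·), (μ (n / d) : ℤ)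
      = ∑ e ∈ (n / t).divisors, (μ e : ℤ) := by
    apply Finset.sum_nbij' (fun d => n / d) (fun e => n / e)
    · intro d hd
      simp only [Finset.mem_filter, Nat.mem_divisors] at hd
      obtain ⟨⟨hdn, _⟩, htd⟩ := hd
      simp only [Nat.mem_divisors]
      constructor
      · obtain ⟨s, rfl⟩ := htd
        obtain ⟨c, hc⟩ := hdn
        have hts : t * s ≠ 0 := fun h => hn (by rw [hc, h, zero_mul])
        have ht0' : 0 < t := Nat.pos_of_ne_zero ht0
        rw [hc, Nat.mul_div_cancel_left _ (Nat.pos_of_ne_zero hts),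
          mul_assoc, Nat.mul_div_cancel_left _ ht0']
        exact Dvd.intro_left s rfl
      · exact Nat.div_ne_zero_iff.mpr ⟨ht0, Nat.le_of_dvd (Nat.pos_of_ne_zero hn) ht⟩
    · intro e he
      simp only [Nat.mem_divisors] at he
      obtain ⟨hent, hnt0⟩ := he
      have hen : e ∣ n := hent.trans (Nat.div_dvd_of_dvd ht)
      have he0 : e ≠ 0 := fun h => hnt0 (by simpa [h] using hent)
      simp only [Finset.mem_filter, Nat.mem_divisors]
      refine ⟨⟨Nat.div_dvd_of_dvd hen, hn⟩, ?_⟩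
      obtain ⟨f, hf⟩ := hent
      obtain ⟨g, hg⟩ := ht
      have hgef : g = e * f := by
        have := hf
        rw [hg, Nat.mul_div_cancel_left _ (Nat.pos_of_ne_zero ht0)] at this
        exact this
      have hn' : n = e * (t * f) := by rw [hg, hgef]; ring
      rw [hn', Nat.mul_div_cancel_left _ (Nat.pos_of_ne_zero he0)]
      exact Dvd.intro f rfl
    · intro d hd
      simp only [Finset.mem_filter, Nat.mem_divisors] at hd
      exact Nat.div_div_self hd.1.1 hn
    · intro e he
      simp only [Nat.mem_divisors] at he
      exact Nat.div_div_self (he.1.trans (Nat.div_dvd_of_dvd ht)) hn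
    · intro d hd
      rfl
  rw [key, sum_moebius_divisors]
  congr 1
  obtain ⟨g, rfl⟩ := ht
  rw [Nat.mul_div_cancel_left _ (Nat.pos_of_ne_zero ht0)]
  simp only [eq_iff_iff]
  constructor
  · rintro rfl; simp
  · intro h
    have h' : t * g = t * 1 := by rw [mul_one]; exact h
    exact Nat.eq_of_mul_eq_mul_left (Nat.pos_of_ne_zero ht0) h'

theorem eval_E_a1_a2 (m₁ m₂ : ℕ) (hm₁ : 0 < m₁) (hm₂ : 0 < m₂)
    (a₁ a₂ : ℤ) (ha : |a₁ - a₂| = 1) :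
    (1 / (Nat.lcm m₁ m₂ : ℚ)) *
      ∑ k ∈ Icc 1 (Nat.lcm m₁ m₂),
        (ramanujanSum m₁ ((k : ℤ) - a₁) : ℚ) * (ramanujanSum m₂ ((k : ℤ) - a₂) : ℚ) =
    if m₁ = m₂ ∧ Squarefree (Nat.lcm m₁ m₂) then
      (-1 : ℚ) ^ (Nat.lcm m₁ m₂).primeFactors.card
    else 0 := by
  set m := Nat.lcm m₁ m₂ with hmdef
  have hm : 0 < m := Nat.lcm_pos hm₁ hm₂
  have h₁m : m₁ ∣ m := Nat.dvd_lcm_left _ _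
  have h₂m : m₂ ∣ m := Nat.dvd_lcm_right _ _
  -- Step 1: expand the Ramanujan sums and swap summation order
  have hk : ∀ k : ℕ, (ramanujanSum m₁ ((k:ℤ) - a₁) : ℚ) * (ramanujanSum m₂ ((k:ℤ) - a₂) : ℚ)
      = ∑ d₁ ∈ m₁.divisors, ∑ d₂ ∈ m₂.divisors,
          if ((d₁:ℤ) ∣ (k:ℤ) - a₁ ∧ (d₂:ℤ) ∣ (k:ℤ) - a₂)
          then ((d₁ : ℚ) * ((μ (m₁/d₁) : ℤ) : ℚ) * ((d₂:ℚ) * ((μ (m₂/d₂) : ℤ) : ℚ))) else 0 := by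
    intro k
    rw [ramanujanSum_eq m₁ hm₁.ne' _, ramanujanSum_eq m₂ hm₂.ne' _]
    push_cast [apply_ite (fun z : ℤ => (z : ℚ))]
    rw [Finset.sum_mul_sum]
    refine Finset.sum_congr rfl fun d₁ _ => Finset.sum_congr rfl fun d₂ _ => ?_
    rw [ite_zero_mul_ite_zero]
  have step1 : ∑ k ∈ Icc 1 m,
        (ramanujanSum m₁ ((k:ℤ) - a₁) : ℚ) * (ramanujanSum m₂ ((k:ℤ) - a₂) : ℚ)
      = ∑ d₁ ∈ m₁.divisors, ∑ d₂ ∈ m₂.divisors,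
          ((((Icc 1 m).filter (fun k : ℕ => (d₁:ℤ) ∣ (k:ℤ) - a₁ ∧ (d₂:ℤ) ∣ (k:ℤ) - a₂)).card : ℚ))
          * ((d₁ : ℚ) * ((μ (m₁/d₁) : ℤ) : ℚ) * ((d₂:ℚ) * ((μ (m₂/d₂) : ℤ) : ℚ))) := by
    rw [Finset.sum_congr rfl fun k _ => hk k]
    rw [Finset.sum_comm]
    refine Finset.sum_congr rfl fun d₁ _ => ?_
    rw [Finset.sum_comm]
    refine Finset.sum_congr rfl fun d₂ _ => ?_
    rw [← Finset.sum_filter, Finset.sum_const, nsmul_eq_mul]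
  rw [step1, Finset.mul_sum]
  -- Step 2: evaluate the counts and simplify
  have step2 : ∀ d₁ ∈ m₁.divisors, (1 / (m:ℚ)) * (∑ d₂ ∈ m₂.divisors,
          ((((Icc 1 m).filter (fun k : ℕ => (d₁:ℤ) ∣ (k:ℤ) - a₁ ∧ (d₂:ℤ) ∣ (k:ℤ) - a₂)).card : ℚ))
          * ((d₁ : ℚ) * ((μ (m₁/d₁) : ℤ) : ℚ) * ((d₂:ℚ) * ((μ (m₂/d₂) : ℤ) : ℚ))))
      = ∑ d₂ ∈ m₂.divisors, if Nat.gcd d₁ d₂ = 1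
          then ((μ (m₁/d₁) : ℤ) : ℚ) * ((μ (m₂/d₂) : ℤ) : ℚ) else 0 := by
    intro d₁ hd₁
    rw [Finset.mul_sum]
    refine Finset.sum_congr rfl fun d₂ hd₂ => ?_
    rw [Nat.mem_divisors] at hd₁ hd₂
    have hd₁0 : 0 < d₁ := Nat.pos_of_dvd_of_pos hd₁.1 hm₁
    have hd₂0 : 0 < d₂ := Nat.pos_of_dvd_of_pos hd₂.1 hm₂
    rw [count_two m d₁ d₂ hd₁0 hd₂0 (hd₁.1.trans h₁m) (hd₂.1.trans h₂m) a₁ a₂ ha]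
    split_ifs with hg
    · have hdd : d₁ * d₂ ∣ m :=
        Nat.Coprime.mul_dvd_of_dvd_of_dvd hg (hd₁.1.trans h₁m) (hd₂.1.trans h₂m)
      have hcast : ((m / (d₁ * d₂) : ℕ) : ℚ) * ((d₁:ℚ) * (d₂:ℚ)) = (m:ℚ) := by
        rw_mod_cast [Nat.div_mul_cancel hdd]
      have hm0 : (m:ℚ) ≠ 0 := by exact_mod_cast hm.ne'
      field_simp
      linear_combination (((μ (m₁/d₁) : ℤ) : ℚ) * ((μ (m₂/d₂) : ℤ) : ℚ)) * hcast
    · simp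
  rw [Finset.sum_congr rfl step2]
  -- Step 3: Möbius inversion over t
  set G := Nat.gcd m₁ m₂ with hGdef
  have hG0 : G ≠ 0 := Nat.pos_of_ne_zero (fun h => hm₁.ne' ((Nat.gcd_eq_zero_iff.mp h).1)) |>.ne'
  have hind : ∀ d₁ d₂ : ℕ, d₁ ∣ m₁ → d₂ ∣ m₂ → 0 < d₁ →
      (if Nat.gcd d₁ d₂ = 1 then (1:ℚ) else 0)
      = ∑ t ∈ G.divisors, if t ∣ d₁ then (if t ∣ d₂ then ((μ t : ℤ):ℚ) else 0) else 0 := by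
    intro d₁ d₂ h1 h2 h1p
    have hset : (Nat.gcd d₁ d₂).divisors = G.divisors.filter (fun t => t ∣ d₁ ∧ t ∣ d₂) := by
      ext t
      simp only [Nat.mem_divisors, Finset.mem_filter]
      constructor
      · rintro ⟨htg, hne⟩
        have ht1 : t ∣ d₁ := htg.trans (Nat.gcd_dvd_left _ _)
        have ht2 : t ∣ d₂ := htg.trans (Nat.gcd_dvd_right _ _)
        exact ⟨⟨Nat.dvd_gcd (ht1.trans h1) (ht2.trans h2), hG0⟩, ht1, ht2⟩
      · rintro ⟨⟨-, -⟩, ht1, ht2⟩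
        refine ⟨Nat.dvd_gcd ht1 ht2, ?_⟩
        exact (Nat.gcd_pos_of_pos_left d₂ h1p).ne'
    have := sum_moebius_divisors (Nat.gcd d₁ d₂)
    rw [hset, Finset.sum_filter] at this
    calc (if Nat.gcd d₁ d₂ = 1 then (1:ℚ) else 0)
        = (((if Nat.gcd d₁ d₂ = 1 then 1 else 0 : ℤ)):ℚ) := by split_ifs <;> simp
      _ = ((∑ t ∈ G.divisors, if t ∣ d₁ ∧ t ∣ d₂ then (μ t : ℤ) else 0 : ℤ) : ℚ) := by
          rw [this]
      _ = _ := by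
          push_cast [apply_ite (fun z : ℤ => (z : ℚ))]
          exact Finset.sum_congr rfl fun t _ => by rw [ite_and]
  have step3 : ∑ d₁ ∈ m₁.divisors, ∑ d₂ ∈ m₂.divisors,
        (if Nat.gcd d₁ d₂ = 1 then ((μ (m₁/d₁) : ℤ):ℚ) * ((μ (m₂/d₂) : ℤ):ℚ) else 0)
      = ∑ t ∈ G.divisors, ((μ t : ℤ):ℚ) *
          ((if m₁ = t then (1:ℚ) else 0) * (if m₂ = t then (1:ℚ) else 0)) := by
    have expand : ∀ d₁ ∈ m₁.divisors, ∀ d₂ ∈ m₂.divisors,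
        (if Nat.gcd d₁ d₂ = 1 then ((μ (m₁/d₁) : ℤ):ℚ) * ((μ (m₂/d₂) : ℤ):ℚ) else 0)
        = ∑ t ∈ G.divisors,
            (if t ∣ d₁ then ((μ (m₁/d₁) : ℤ):ℚ) * ((μ t : ℤ):ℚ) else 0) *
            (if t ∣ d₂ then ((μ (m₂/d₂) : ℤ):ℚ) else 0) := by
      intro d₁ hd₁ d₂ hd₂
      rw [Nat.mem_divisors] at hd₁ hd₂
      have h1p : 0 < d₁ := Nat.pos_of_dvd_of_pos hd₁.1 hm₁
      have : (if Nat.gcd d₁ d₂ = 1 then ((μ (m₁/d₁) : ℤ):ℚ) * ((μ (m₂/d₂) : ℤ):ℚ) else 0)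
          = (((μ (m₁/d₁) : ℤ):ℚ) * ((μ (m₂/d₂) : ℤ):ℚ)) *
            (if Nat.gcd d₁ d₂ = 1 then (1:ℚ) else 0) := by
        split_ifs <;> ring
      rw [this, hind d₁ d₂ hd₁.1 hd₂.1 h1p, Finset.mul_sum]
      exact Finset.sum_congr rfl fun t _ => by split_ifs <;> ring
    rw [Finset.sum_congr rfl fun d₁ hd₁ =>
      Finset.sum_congr rfl fun d₂ hd₂ => expand d₁ hd₁ d₂ hd₂]
    rw [Finset.sum_congr rfl fun d₁ (_ : d₁ ∈ m₁.divisors) =>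
      (Finset.sum_comm : ∑ d₂ ∈ m₂.divisors, ∑ t ∈ G.divisors,
        (if t ∣ d₁ then ((μ (m₁/d₁) : ℤ):ℚ) * ((μ t : ℤ):ℚ) else 0) *
        (if t ∣ d₂ then ((μ (m₂/d₂) : ℤ):ℚ) else 0) = _)]
    rw [Finset.sum_comm]
    refine Finset.sum_congr rfl fun t ht => ?_
    rw [Nat.mem_divisors] at ht
    have htm₁ : t ∣ m₁ := ht.1.trans (Nat.gcd_dvd_left _ _)
    have htm₂ : t ∣ m₂ := ht.1.trans (Nat.gcd_dvd_right _ _)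
    have inner₂ : ∀ X : ℚ, ∑ d₂ ∈ m₂.divisors, X * (if t ∣ d₂ then ((μ (m₂/d₂) : ℤ):ℚ) else 0)
        = X * (if m₂ = t then (1:ℚ) else 0) := by
      intro X
      rw [← Finset.mul_sum]
      congr 1
      rw [← Finset.sum_filter]
      have := sum_moebius_div_filter m₂ t hm₂.ne' htm₂
      calc (∑ d ∈ m₂.divisors.filter (t ∣ ·), ((μ (m₂/d) : ℤ):ℚ))
          = ((∑ d ∈ m₂.divisors.filter (t ∣ ·), (μ (m₂/d)) : ℤ) : ℚ) := by push_cast; rfl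
        _ = _ := by rw [this]; split_ifs <;> simp
    calc ∑ d₁ ∈ m₁.divisors, ∑ d₂ ∈ m₂.divisors,
          (if t ∣ d₁ then ((μ (m₁/d₁) : ℤ):ℚ) * ((μ t : ℤ):ℚ) else 0) *
          (if t ∣ d₂ then ((μ (m₂/d₂) : ℤ):ℚ) else 0)
        = ∑ d₁ ∈ m₁.divisors,
          (if t ∣ d₁ then ((μ (m₁/d₁) : ℤ):ℚ) * ((μ t : ℤ):ℚ) else 0) *
          (if m₂ = t then (1:ℚ) else 0) := by
          exact Finset.sum_congr rfl fun d₁ _ => inner₂ _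
      _ = (∑ d₁ ∈ m₁.divisors, (if t ∣ d₁ then ((μ (m₁/d₁) : ℤ):ℚ) else 0)) *
          (((μ t : ℤ):ℚ) * (if m₂ = t then (1:ℚ) else 0)) := by
          rw [Finset.sum_mul]
          refine Finset.sum_congr rfl fun d₁ _ => ?_
          split_ifs <;> ring
      _ = _ := by
          rw [← Finset.sum_filter]
          have h1 := sum_moebius_div_filter m₁ t hm₁.ne' htm₁
          have : (∑ d ∈ m₁.divisors.filter (t ∣ ·), ((μ (m₁/d) : ℤ):ℚ))
              = ((if m₁ = t then 1 else 0 : ℤ) : ℚ) := by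
            rw [← h1]; push_cast; rfl
          rw [this]
          split_ifs <;> ring
  rw [step3]
  -- Step 4: final evaluation
  by_cases hmm : m₁ = m₂
  · subst hmm
    have hGm : G = m₁ := Nat.gcd_self m₁
    have hlcm : m = m₁ := Nat.lcm_self m₁
    have : ∀ t ∈ G.divisors, ((μ t : ℤ):ℚ) *
          ((if m₁ = t then (1:ℚ) else 0) * (if m₁ = t then (1:ℚ) else 0))
        = if t = m₁ then ((μ t : ℤ):ℚ) else 0 := by
      intro t _
      rcases eq_or_ne m₁ t with h | h
      · simp [h]
      · simp [h, Ne.symm h]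
    rw [Finset.sum_congr rfl this, Finset.sum_ite_eq' G.divisors m₁ (fun t => ((μ t : ℤ):ℚ))]
    rw [if_pos (by rw [hGm]; exact Nat.mem_divisors_self m₁ hm₁.ne')]
    rw [hlcm]
    by_cases hsf : Squarefree m₁
    · rw [if_pos ⟨rfl, hsf⟩]
      rw [moebius_apply_of_squarefree hsf]
      have hωΩ : ω m₁ = Ω m₁ :=
        (cardDistinctFactors_eq_cardFactors_iff_squarefree hm₁.ne').mpr hsf
      have hcard : m₁.primeFactors.card = ω m₁ := by
        rw [cardDistinctFactors_apply, ← Nat.toFinset_factors, List.card_toFinset]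
      rw [hcard, hωΩ]
      push_cast
      ring
    · rw [if_neg (by rintro ⟨-, h⟩; exact hsf h)]
      rw [moebius_eq_zero_of_not_squarefree hsf]
      simp
  · rw [if_neg (by rintro ⟨h, -⟩; exact hmm h)]
    refine Finset.sum_eq_zero fun t _ => ?_
    rcases eq_or_ne m₁ t with h | h
    · have : ¬ (m₂ = t) := fun h2 => hmm (h.trans h2.symm)
      simp [this]
    · simp [h]
end

section
/- Let g_1,…,g_r be integer polynomials and m = lcm(m_1,…,m_r). Then Σ_{1 ≤ k ≤ m, gcd(k,m)=1} c_{m_1}(g_1(k))···c_{m_r}(g_r(k)) = φ(m)·Σ_{d_1|m_1,…,d_r|m_r} [d_1 μ(m_1/d_1)···d_r μ(m_r/d_r)/φ(lcm(d_1,…,d_r))]·η_G(d_1,…,d_r), where η_G(d_1,…,d_r) counts x mod lcm(d_1,…,d_r) with g_i(x) ≡ 0 (mod d_i) and gcd(x, d_i) = 1 for all i. -/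
open Finset ArithmeticFunction

/-- `η_G(d₁,…,d_r)`: the number of `x` mod `lcm(d₁,…,d_r)` with `gᵢ(x) ≡ 0 (mod dᵢ)`
and `gcd(x, dᵢ) = 1` for all `i`. -/
def etaG {r : ℕ} (g : Fin r → Polynomial ℤ) (d : Fin r → ℕ) : ℕ :=
  ((Finset.range (Finset.univ.lcm d)).filter
    (fun x : ℕ => ∀ i, (d i : ℤ) ∣ (g i).eval (x : ℤ) ∧ Nat.gcd x (d i) = 1)).card

lemma gcd_divisors_eq (n : ℕ) (hn : n ≠ 0) (k : ℤ) :
    (Int.gcd k n).divisors = n.divisors.filter (fun d : ℕ => (d : ℤ) ∣ k) := by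
  have habs : Int.gcd k n = Nat.gcd k.natAbs n := by
    rw [Int.gcd]; simp
  ext d
  simp only [Nat.mem_divisors, Finset.mem_filter, habs]
  rw [Nat.dvd_gcd_iff]
  constructor
  · rintro ⟨⟨h1, h2⟩, -⟩
    refine ⟨⟨h2, hn⟩, ?_⟩
    rw [← Int.natAbs_dvd_natAbs]
    simpa using h1
  · rintro ⟨⟨h2, -⟩, h1⟩
    refine ⟨⟨?_, h2⟩, ?_⟩
    · rw [← Int.natAbs_dvd_natAbs] at h1
      simpa using h1
    · simp [Nat.gcd_eq_zero_iff, hn]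

lemma ramanujanSum_cast (n : ℕ) (hn : n ≠ 0) (k : ℤ) :
    (ramanujanSum n k : ℚ) =
      ∑ d ∈ n.divisors, if (d : ℤ) ∣ k then (d : ℚ) * (moebius (n / d) : ℚ) else 0 := by
  rw [ramanujanSum, ← Finset.sum_filter, ← gcd_divisors_eq n hn k]
  push_cast
  rfl

lemma coprime_lcm_of {r : ℕ} (x : ℕ) (d : Fin r → ℕ) (h : ∀ i, Nat.Coprime x (d i)) :
    Nat.Coprime x (Finset.univ.lcm d) := by
  have h1 : Finset.univ.lcm d ∣ ∏ i, d i :=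
    Finset.lcm_dvd fun i _ => Finset.dvd_prod_of_mem d (Finset.mem_univ i)
  exact Nat.Coprime.coprime_dvd_right h1 (Nat.Coprime.prod_right fun i _ => h i)

lemma coprime_mod_of_dvd {k L c : ℕ} (hc : c ∣ L) (h : Nat.Coprime k c) :
    Nat.Coprime (k % L) c := by
  have : Nat.gcd c (k % L) = Nat.gcd c k := by
    rw [Nat.gcd_rec, Nat.mod_mod_of_dvd _ hc, ← Nat.gcd_rec]
  unfold Nat.Coprime
  rw [Nat.gcd_comm, this, Nat.gcd_comm]
  exact h

lemma dvd_eval_trans (p : Polynomial ℤ) {c : ℕ} {a b : ℤ} (hab : (c : ℤ) ∣ a - b)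
    (h : (c : ℤ) ∣ p.eval b) : (c : ℤ) ∣ p.eval a := by
  have h2 : (c : ℤ) ∣ p.eval a - p.eval b :=
    dvd_trans hab (Polynomial.sub_dvd_eval_sub a b p)
  have := dvd_add h2 h
  simpa using this

lemma card_fiber_units (M L : ℕ) [NeZero M] [NeZero L] (h : L ∣ M) (u0 : (ZMod L)ˣ) :
    L.totient * Nat.card {u : (ZMod M)ˣ // ZMod.unitsMap h u = u0} = M.totient := by
  have hs := ZMod.unitsMap_surjective (m := M) (n := L) h
  have h1 : Nat.card (ZMod M)ˣ = Nat.card (ZMod L)ˣ * Nat.card (ZMod.unitsMap h).ker := by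
    rw [Subgroup.card_eq_card_quotient_mul_card_subgroup (ZMod.unitsMap h).ker]
    congr 1
    exact Nat.card_congr (QuotientGroup.quotientKerEquivOfSurjective _ hs).toEquiv
  have h2 : Nat.card {u : (ZMod M)ˣ // ZMod.unitsMap h u = u0}
      = Nat.card (ZMod.unitsMap h).ker :=
    Nat.card_congr ((Equiv.subtypeEquivRight (q := fun u => u ∈ ZMod.unitsMap h ⁻¹' {u0})
      (fun u => by simp)).trans (MonoidHom.fiberEquivKerOfSurjective hs u0))
  rw [h2]
  have hM : Nat.card (ZMod M)ˣ = M.totient := by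
    rw [Nat.card_eq_fintype_card, ZMod.card_units_eq_totient]
  have hL : Nat.card (ZMod L)ˣ = L.totient := by
    rw [Nat.card_eq_fintype_card, ZMod.card_units_eq_totient]
  rw [← hM, ← hL, ← h1]

lemma count_coprime_residue (M L : ℕ) (hLM : L ∣ M) (hM : 0 < M)
    (x : ℕ) (hx : Nat.Coprime x L) :
    L.totient *
      ((Icc 1 M).filter (fun k => Nat.gcd k M = 1 ∧ k % L = x % L)).card = M.totient := by
  have hL : 0 < L := Nat.pos_of_dvd_of_pos hLM hM
  rcases eq_or_lt_of_le (Nat.one_le_iff_ne_zero.mpr hM.ne') with hM1 | hM1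
  · -- M = 1
    have hM1 : M = 1 := hM1.symm
    have hL1 : L = 1 := Nat.eq_one_of_dvd_one (hM1 ▸ hLM)
    subst hM1; subst hL1
    simp [Finset.filter_true_of_mem, Finset.Icc_self, Nat.mod_one]
  · -- 1 < M
    haveI : NeZero M := ⟨hM.ne'⟩
    haveI : NeZero L := ⟨hL.ne'⟩
    haveI : Fact (1 < M) := ⟨hM1⟩
    set u0 : (ZMod L)ˣ := ZMod.unitOfCoprime x hx with hu0
    have key := card_fiber_units M L hLM u0
    rw [Nat.card_eq_fintype_card, Fintype.card_subtype] at key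
    rw [← key]
    congr 1
    apply Finset.card_bij (fun k hk => ZMod.unitOfCoprime k
      (by exact (Finset.mem_filter.mp hk).2.1))
    · intro k hk
      obtain ⟨hk1, hk2, hk3⟩ := Finset.mem_filter.mp hk
      simp only [Finset.mem_filter, Finset.mem_univ, true_and]
      ext
      simp only [ZMod.unitsMap_def, Units.coe_map, MonoidHom.coe_coe, ZMod.coe_unitOfCoprime,
        hu0, ZMod.castHom_apply]
      rw [ZMod.cast_natCast hLM, ZMod.natCast_eq_natCast_iff]
      exact hk3
    · intro a ha b hb hab
      obtain ⟨ha1, ha2, -⟩ := Finset.mem_filter.mp ha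
      obtain ⟨hb1, hb2, -⟩ := Finset.mem_filter.mp hb
      rw [Finset.mem_Icc] at ha1 hb1
      have h1 : (a : ZMod M) = (b : ZMod M) := by
        have := congrArg (Units.val) hab
        simpa [ZMod.coe_unitOfCoprime] using this
      rw [ZMod.natCast_eq_natCast_iff] at h1
      have ha3 : a < M := by
        rcases lt_or_eq_of_le ha1.2 with h | h
        · exact h
        · subst h; simp [Nat.gcd_self] at ha2; omega
      have hb3 : b < M := by
        rcases lt_or_eq_of_le hb1.2 with h | h
        · exact h
        · subst h; simp [Nat.gcd_self] at hb2; omega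
      have := h1
      unfold Nat.ModEq at this
      rwa [Nat.mod_eq_of_lt ha3, Nat.mod_eq_of_lt hb3] at this
    · intro u hu
      simp only [Finset.mem_filter, Finset.mem_univ, true_and] at hu
      set k := (u : ZMod M).val with hk
      have hkM : k < M := ZMod.val_lt _
      have hkcop : Nat.Coprime k M := ZMod.val_coe_unit_coprime u
      have hk0 : 1 ≤ k := by
        rcases Nat.eq_zero_or_pos k with h | h
        · exfalso
          have h0 : ((u : ZMod M)) = 0 := by rw [← ZMod.val_eq_zero]; exact h
          have h1 := u.isUnit
          rw [h0, isUnit_zero_iff] at h1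
          exact zero_ne_one (α := ZMod M) h1
        · exact h
      refine ⟨k, Finset.mem_filter.mpr ⟨Finset.mem_Icc.mpr ⟨hk0, hkM.le⟩, hkcop, ?_⟩, ?_⟩
      · -- k % L = x % L
        have h1 : ZMod.unitsMap hLM u = u0 := hu
        have h2 : (ZMod.cast (u : ZMod M) : ZMod L) = (x : ZMod L) := by
          have := congrArg (Units.val) h1
          simpa [ZMod.unitsMap_def, ZMod.coe_unitOfCoprime, hu0] using this
        have h3 : ((k : ℕ) : ZMod M) = (u : ZMod M) := by
          rw [hk, ZMod.natCast_val, ZMod.cast_id]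
        rw [← h3, ZMod.cast_natCast hLM, ZMod.natCast_eq_natCast_iff] at h2
        exact h2
      · -- unitOfCoprime k _ = u
        ext
        simp only [ZMod.coe_unitOfCoprime]
        rw [hk, ZMod.natCast_val, ZMod.cast_id]

lemma key_count {r : ℕ} (g : Fin r → Polynomial ℤ) (m d : Fin r → ℕ)
    (hm : ∀ i, 0 < m i) (hdm : ∀ i, d i ∣ m i) :
    (Finset.univ.lcm d).totient *
      ((Icc 1 (Finset.univ.lcm m)).filter
        (fun k => Nat.gcd k (Finset.univ.lcm m) = 1 ∧
          ∀ i, (d i : ℤ) ∣ (g i).eval (k : ℤ))).card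
    = (Finset.univ.lcm m).totient * etaG g d := by
  classical
  set M := Finset.univ.lcm m with hMdef
  set L := Finset.univ.lcm d with hLdef
  have hMpos : 0 < M := by
    have h1 : M ∣ ∏ i, m i := Finset.lcm_dvd fun i _ => Finset.dvd_prod_of_mem m (mem_univ i)
    exact Nat.pos_of_dvd_of_pos h1 (Finset.prod_pos fun i _ => hm i)
  have hdL : ∀ i, d i ∣ L := fun i => Finset.dvd_lcm (mem_univ i)
  have hmM : ∀ i, m i ∣ M := fun i => Finset.dvd_lcm (mem_univ i)
  have hLM : L ∣ M := Finset.lcm_dvd fun i _ => (hdm i).trans (hmM i)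
  have hLpos : 0 < L := Nat.pos_of_dvd_of_pos hLM hMpos
  set A := (Icc 1 M).filter
    (fun k => Nat.gcd k M = 1 ∧ ∀ i, (d i : ℤ) ∣ (g i).eval (k : ℤ)) with hA
  set B := (Finset.range L).filter
    (fun x : ℕ => ∀ i, (d i : ℤ) ∣ (g i).eval (x : ℤ) ∧ Nat.gcd x (d i) = 1) with hB
  have hmaps : ∀ k ∈ A, k % L ∈ B := by
    intro k hk
    obtain ⟨hk1, hk2, hk3⟩ := Finset.mem_filter.mp hk
    refine Finset.mem_filter.mpr ⟨Finset.mem_range.mpr (Nat.mod_lt _ hLpos), fun i => ⟨?_, ?_⟩⟩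
    · have h1 : k % L ≡ k [MOD d i] := (Nat.mod_modEq k L).of_dvd (hdL i)
      have h2 : (d i : ℤ) ∣ (k : ℤ) - ((k % L : ℕ) : ℤ) := h1.dvd
      exact dvd_eval_trans _ ((dvd_sub_comm).mp h2) (hk3 i)
    · exact coprime_mod_of_dvd (hdL i) (Nat.Coprime.coprime_dvd_right
        ((hdm i).trans (hmM i)) hk2)
  have hcard := Finset.card_eq_sum_card_fiberwise hmaps
  have hfiber : ∀ x ∈ B, (A.filter (fun k => k % L = x)).card
      = ((Icc 1 M).filter (fun k => Nat.gcd k M = 1 ∧ k % L = x % L)).card := by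
    intro x hx
    obtain ⟨hx1, hx2⟩ := Finset.mem_filter.mp hx
    rw [Finset.mem_range] at hx1
    have hxL : x % L = x := Nat.mod_eq_of_lt hx1
    congr 1
    rw [hA, Finset.filter_filter]
    apply Finset.filter_congr
    intro k hk
    constructor
    · rintro ⟨⟨hg1, -⟩, hg2⟩
      exact ⟨hg1, by rw [hg2, hxL]⟩
    · rintro ⟨hg1, hg2⟩
      rw [hxL] at hg2
      refine ⟨⟨hg1, fun i => ?_⟩, hg2⟩
      have h1 : x ≡ k [MOD d i] := (Nat.ModEq.of_dvd (hdL i)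
        (show k ≡ x [MOD L] from by unfold Nat.ModEq; rw [hg2, hxL])).symm
      exact dvd_eval_trans _ h1.dvd (hx2 i).1
  have hcount : ∀ x ∈ B, L.totient *
      ((Icc 1 M).filter (fun k => Nat.gcd k M = 1 ∧ k % L = x % L)).card = M.totient := by
    intro x hx
    obtain ⟨-, hx2⟩ := Finset.mem_filter.mp hx
    exact count_coprime_residue M L hLM hMpos x (coprime_lcm_of x d fun i => (hx2 i).2)
  calc L.totient * A.card = ∑ x ∈ B, L.totient * (A.filter (fun k => k % L = x)).card := by
        rw [hcard, Finset.mul_sum]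
    _ = ∑ x ∈ B, M.totient := by
        refine Finset.sum_congr rfl fun x hx => ?_
        rw [hfiber x hx, hcount x hx]
    _ = M.totient * etaG g d := by
        rw [Finset.sum_const, smul_eq_mul, mul_comm]
        rfl

theorem eval_R_G {r : ℕ} (g : Fin r → Polynomial ℤ) (m : Fin r → ℕ)
    (hm : ∀ i, 0 < m i) :
    ∑ k ∈ (Icc 1 (Finset.univ.lcm m)).filter
        (fun k => Nat.gcd k (Finset.univ.lcm m) = 1),
      ∏ i, (ramanujanSum (m i) ((g i).eval (k : ℤ)) : ℚ) =
    (Nat.totient (Finset.univ.lcm m) : ℚ) *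
      ∑ d ∈ Fintype.piFinset (fun i => (m i).divisors),
        (∏ i, (d i : ℚ) * (moebius (m i / d i) : ℚ)) /
            (Nat.totient (Finset.univ.lcm d) : ℚ) * (etaG g d : ℚ) := by
  classical
  have step1 : ∀ k : ℕ,
      ∏ i, (ramanujanSum (m i) ((g i).eval (k : ℤ)) : ℚ)
      = ∑ p ∈ Fintype.piFinset (fun i => (m i).divisors),
          if ∀ i, (p i : ℤ) ∣ (g i).eval (k : ℤ) then
            ∏ i, (p i : ℚ) * (moebius (m i / p i) : ℚ) else 0 := by
    intro k
    calc ∏ i, (ramanujanSum (m i) ((g i).eval (k : ℤ)) : ℚ)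
        = ∏ i, ∑ e ∈ (m i).divisors,
            if (e : ℤ) ∣ (g i).eval (k : ℤ) then (e : ℚ) * (moebius (m i / e) : ℚ) else 0 :=
          Finset.prod_congr rfl fun i _ => ramanujanSum_cast (m i) (hm i).ne' _
      _ = ∑ p ∈ Fintype.piFinset (fun i => (m i).divisors),
            ∏ i, if (p i : ℤ) ∣ (g i).eval (k : ℤ) then
              (p i : ℚ) * (moebius (m i / p i) : ℚ) else 0 :=
          Finset.prod_univ_sum _ _
      _ = _ := by
          refine Finset.sum_congr rfl fun p _ => ?_
          rw [Fintype.prod_ite_zero]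
          congr 1
  simp only [step1]
  rw [Finset.sum_comm, Finset.mul_sum]
  refine Finset.sum_congr rfl fun p hp => ?_
  rw [← Finset.sum_filter, Finset.sum_const, Finset.filter_filter]
  have hdm : ∀ i, p i ∣ m i := fun i =>
    (Nat.mem_divisors.mp ((Fintype.mem_piFinset.mp hp) i)).1
  have key := key_count g m p hm hdm
  have hLpos : 0 < (Finset.univ.lcm p).totient := by
    apply Nat.totient_pos.mpr
    apply Nat.pos_of_dvd_of_pos
      (Finset.lcm_dvd fun i _ => Finset.dvd_prod_of_mem p (mem_univ i))
    exact Finset.prod_pos fun i _ => Nat.pos_of_dvd_of_pos (hdm i) (hm i)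
  have hφL : ((Finset.univ.lcm p).totient : ℚ) ≠ 0 := by exact_mod_cast hLpos.ne'
  have keyQ : ((Finset.univ.lcm p).totient : ℚ) *
      (((Icc 1 (Finset.univ.lcm m)).filter
        (fun k => Nat.gcd k (Finset.univ.lcm m) = 1 ∧
          ∀ i, (p i : ℤ) ∣ (g i).eval (k : ℤ))).card : ℚ)
      = ((Finset.univ.lcm m).totient : ℚ) * (etaG g p : ℚ) := by
    exact_mod_cast key
  rw [nsmul_eq_mul]
  field_simp
  linear_combination (∏ i, (p i : ℚ) * (moebius (m i / p i) : ℚ)) * keyQ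
end

section
/- Write n = 2^j · m with m odd. Then Σ_{1 ≤ k ≤ n, gcd(k,n)=1} c_n(k² − 1) equals d_j · ψ(m) if j ∈ {0,1,2,3} and m is squarefree (with d_0 = d_1 = 1, d_2 = 4, d_3 = 16), and 0 otherwise. -/
open Finset ArithmeticFunction

open scoped ArithmeticFunction.Moebius

/-- number of square roots of 1 in `ZMod d` -/
noncomputable def sq1count (d : ℕ) : ℕ := Nat.card {x : ZMod d // x ^ 2 = 1}

lemma sq1count_one : sq1count 1 = 1 := by
  have : Unique {x : ZMod 1 // x ^ 2 = 1} :=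
    { default := ⟨1, by decide⟩, uniq := fun a => Subtype.ext (Subsingleton.elim _ _) }
  simp [sq1count, Nat.card_unique]

lemma sq1count_mul {a b : ℕ} (h : Nat.Coprime a b) :
    sq1count (a * b) = sq1count a * sq1count b := by
  rcases eq_or_ne a 0 with rfl | ha
  · have : b = 1 := by simpa using h
    subst this; simp [sq1count_one]
  rcases eq_or_ne b 0 with rfl | hb
  · have : a = 1 := by simpa [Nat.coprime_zero_right] using h
    subst this; simp [sq1count_one]
  haveI : NeZero a := ⟨ha⟩
  haveI : NeZero b := ⟨hb⟩
  haveI : NeZero (a * b) := ⟨mul_ne_zero ha hb⟩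
  let e := ZMod.chineseRemainder h
  have key : {x : ZMod (a * b) // x ^ 2 = 1} ≃
      {y : ZMod a × ZMod b // y.1 ^ 2 = 1 ∧ y.2 ^ 2 = 1} := by
    refine e.toEquiv.subtypeEquiv fun x => ?_
    constructor
    · intro hx
      have : e (x ^ 2) = e 1 := by rw [hx]
      rw [map_pow, map_one] at this
      constructor
      · have := congrArg Prod.fst this; simpa using this
      · have := congrArg Prod.snd this; simpa using this
    · intro ⟨h1, h2⟩
      have : e (x ^ 2) = e 1 := by
        rw [map_pow, map_one]
        exact Prod.ext (by simpa using h1) (by simpa using h2)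
      exact e.injective this
  rw [sq1count, Nat.card_congr key, sq1count, sq1count,
    Nat.card_congr (Equiv.subtypeProdEquivProd (p := fun x : ZMod a => x ^ 2 = 1)
      (q := fun y : ZMod b => y ^ 2 = 1)), Nat.card_prod]

-- helper: cast injectivity below n
lemma zmod_cast_inj {n i j : ℕ} [NeZero n] (hi : i < n) (hj : j < n)
    (h : (i : ZMod n) = j) : i = j := by
  have := congrArg ZMod.val h
  rwa [ZMod.val_cast_of_lt hi, ZMod.val_cast_of_lt hj] at this

lemma sq_eq_one_int {n : ℕ} [NeZero n] (x : ZMod n) :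
    x ^ 2 = 1 ↔ (n : ℤ) ∣ ((x.val : ℤ) - 1) * ((x.val : ℤ) + 1) := by
  have hx : ((x.val : ℕ) : ZMod n) = x := ZMod.natCast_val x |>.trans (ZMod.cast_id n x)
  rw [show ((x.val : ℤ) - 1) * ((x.val : ℤ) + 1) = (x.val : ℤ) ^ 2 - 1 by ring]
  rw [← ZMod.intCast_zmod_eq_zero_iff_dvd]
  push_cast
  rw [hx, sub_eq_zero]

lemma sq1count_odd_prime_pow {p a : ℕ} (hp : p.Prime) (hp2 : p ≠ 2) (ha : a ≠ 0) :
    sq1count (p ^ a) = 2 := by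
  haveI : NeZero (p ^ a) := ⟨pow_ne_zero a hp.pos.ne'⟩
  have hlt : 2 < p ^ a := by
    have h3 : 3 ≤ p := by have := hp.two_le; omega
    have := Nat.le_self_pow ha p
    omega
  haveI : Fact (2 < p ^ a) := ⟨hlt⟩
  have hiff : ∀ x : ZMod (p ^ a), x ^ 2 = 1 ↔ x = 1 ∨ x = -1 := by
    intro x
    constructor
    · intro hx
      rw [sq_eq_one_int] at hx
      set k : ℤ := (x.val : ℤ) with hk
      have hpz : Prime (p : ℤ) := Nat.prime_iff_prime_int.mp hp
      have hppow : ((p : ℤ)) ∣ (k - 1) * (k + 1) := by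
        refine dvd_trans ?_ (by exact_mod_cast hx)
        exact_mod_cast dvd_pow_self (p:ℤ) ha
      have hx' : ((p : ℤ)) ^ a ∣ (k - 1) * (k + 1) := by exact_mod_cast hx
      have hnot2 : ¬ ((p : ℤ) ∣ 2) := by
        intro h
        have : p ∣ 2 := by exact_mod_cast h
        exact hp2 ((Nat.prime_dvd_prime_iff_eq hp Nat.prime_two).mp this)
      have hx1 : ((x.val : ℕ) : ZMod (p^a)) = x := ZMod.natCast_val x |>.trans (ZMod.cast_id _ x)
      have hx2 : ((k : ℤ) : ZMod (p^a)) = x := by rw [hk]; push_cast; exact_mod_cast hx1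
      rcases hpz.dvd_mul.mp hppow with h1 | h1
      · have hcop : IsCoprime ((p : ℤ) ^ a) (k + 1) := by
          refine IsCoprime.pow_left ?_
          rw [hpz.coprime_iff_not_dvd]
          intro h2
          exact hnot2 (by have := dvd_sub h2 h1; simpa using this)
        have : ((p : ℤ)) ^ a ∣ k - 1 := hcop.dvd_of_dvd_mul_right hx'
        left
        have : ((k - 1 : ℤ) : ZMod (p ^ a)) = 0 := by
          rw [ZMod.intCast_zmod_eq_zero_iff_dvd]; exact_mod_cast this
        push_cast at this
        rw [hx2] at this
        linear_combination this
      · have hcop : IsCoprime ((p : ℤ) ^ a) (k - 1) := by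
          refine IsCoprime.pow_left ?_
          rw [hpz.coprime_iff_not_dvd]
          intro h2
          exact hnot2 (by have := dvd_sub h1 h2; simpa using this)
        have : ((p : ℤ)) ^ a ∣ k + 1 := hcop.dvd_of_dvd_mul_left hx'
        right
        have : ((k + 1 : ℤ) : ZMod (p ^ a)) = 0 := by
          rw [ZMod.intCast_zmod_eq_zero_iff_dvd]; exact_mod_cast this
        push_cast at this
        rw [hx2] at this
        linear_combination this
    · rintro (rfl | rfl) <;> ring
  classical
  rw [sq1count, Nat.card_eq_fintype_card, Fintype.card_subtype]
  have : (univ.filter fun x : ZMod (p ^ a) => x ^ 2 = 1) = {1, -1} := by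
    ext x; simp [hiff x]
  rw [this, card_pair (fun h => ZMod.neg_one_ne_one h.symm)]

lemma sq1count_two : sq1count 2 = 1 := by
  rw [sq1count, Nat.card_eq_fintype_card, Fintype.card_subtype]
  decide

lemma sq1count_four : sq1count 4 = 2 := by
  rw [sq1count, Nat.card_eq_fintype_card, Fintype.card_subtype]
  decide

lemma sq1count_two_pow {a : ℕ} (ha : 3 ≤ a) : sq1count (2 ^ a) = 4 := by
  haveI : NeZero (2 ^ a) := ⟨pow_ne_zero a two_ne_zero⟩
  set c : ZMod (2 ^ a) := ((2 ^ (a - 1) : ℕ) : ZMod (2 ^ a)) with hc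
  have h2a : 2 ^ (a - 1) + 2 ^ (a - 1) = 2 ^ a := by
    rw [← two_mul, ← pow_succ']; congr 1; omega
  have h4 : 4 ≤ 2 ^ (a - 1) := by
    calc 4 = 2 ^ 2 := by norm_num
    _ ≤ 2 ^ (a - 1) := Nat.pow_le_pow_right (by norm_num) (by omega)
  -- squares of the four candidates
  have h2c : (2 : ZMod (2 ^ a)) * c = 0 := by
    rw [hc, two_mul, ← Nat.cast_add, h2a, ZMod.natCast_self]
  have hc2 : c * c = 0 := by
    rw [hc, ← Nat.cast_mul, ZMod.natCast_eq_zero_iff]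
    rw [← pow_add]
    exact pow_dvd_pow 2 (by omega)
  have hiff : ∀ x : ZMod (2 ^ a), x ^ 2 = 1 ↔ x = 1 ∨ x = -1 ∨ x = c + 1 ∨ x = c - 1 := by
    intro x
    constructor
    · intro hx
      rw [sq_eq_one_int] at hx
      set k : ℤ := (x.val : ℤ) with hk
      have hx2 : ((k : ℤ) : ZMod (2 ^ a)) = x := by
        rw [hk]; push_cast
        exact_mod_cast (ZMod.natCast_val x |>.trans (ZMod.cast_id _ x))
      have hxd : (2 : ℤ) ^ a ∣ (k - 1) * (k + 1) := by exact_mod_cast hx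
      -- k is odd
      obtain ⟨t, ht⟩ : Odd k := by
        rcases Int.even_or_odd k with he | ho
        · exfalso
          obtain ⟨t, ht⟩ := he
          have h2d : (2 : ℤ) ∣ (k - 1) * (k + 1) :=
            dvd_trans (dvd_pow_self 2 (by omega : a ≠ 0)) hxd
          obtain ⟨w, hw⟩ := h2d
          have heq : 2 * w = 4 * (t * t) - 1 := by rw [← hw, ht]; ring
          generalize t * t = q at heq
          omega
        · exact ho
      have hpow2 : (2 : ℤ) ^ a = 4 * 2 ^ (a - 2) := by
        rw [show a = 2 + (a - 2) by omega, pow_add]; norm_num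
      have htt : (2 : ℤ) ^ (a - 2) ∣ t * (t + 1) := by
        have : (4 : ℤ) * 2 ^ (a - 2) ∣ 4 * (t * (t + 1)) := by
          rw [← hpow2]
          convert hxd using 1
          rw [ht]; ring
        exact (mul_dvd_mul_iff_left (by norm_num : (4:ℤ) ≠ 0)).mp this
      have hp2 : Prime (2 : ℤ) := Int.prime_two
      have key : (2 : ℤ) ^ (a - 1) ∣ k - 1 ∨ (2 : ℤ) ^ (a - 1) ∣ k + 1 := by
        rcases Int.even_or_odd t with ⟨u, hu⟩ | ⟨u, hu⟩
        · -- t even, t+1 odd, so 2^(a-2) ∣ t, so 2^(a-1) ∣ 2t = k-1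
          have hcop : IsCoprime ((2:ℤ) ^ (a - 2)) (t + 1) := by
            refine IsCoprime.pow_left ?_
            rw [hp2.coprime_iff_not_dvd]
            rintro ⟨w, hw⟩; omega
          have hdt : (2:ℤ) ^ (a - 2) ∣ t := hcop.dvd_of_dvd_mul_right htt
          left
          have : (2:ℤ) ^ (a - 1) = 2 * 2 ^ (a - 2) := by
            rw [← pow_succ']; congr 1; omega
          rw [this, show k - 1 = 2 * t by rw [ht]; ring]
          exact mul_dvd_mul_left 2 hdt
        · have hcop : IsCoprime ((2:ℤ) ^ (a - 2)) t := by
            refine IsCoprime.pow_left ?_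
            rw [hp2.coprime_iff_not_dvd]
            rintro ⟨w, hw⟩; omega
          have hdt : (2:ℤ) ^ (a - 2) ∣ t + 1 := hcop.dvd_of_dvd_mul_left htt
          right
          have : (2:ℤ) ^ (a - 1) = 2 * 2 ^ (a - 2) := by
            rw [← pow_succ']; congr 1; omega
          rw [this, show k + 1 = 2 * (t + 1) by rw [ht]; ring]
          exact mul_dvd_mul_left 2 hdt
      have hcc : ((2 ^ (a - 1) : ℤ) : ZMod (2 ^ a)) = c := by rw [hc]; push_cast; ring
      have hpow1 : (2 : ℤ) ^ a = 2 ^ (a - 1) * 2 := by rw [← pow_succ]; congr 1; omega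
      rcases key with ⟨s, hs⟩ | ⟨s, hs⟩
      · rcases Int.even_or_odd s with ⟨u, hu⟩ | ⟨u, hu⟩
        · left
          have hdd : ((2:ℕ) ^ a : ℤ) ∣ k - 1 := by
            push_cast
            exact ⟨u, by rw [hpow1, hs, hu]; ring⟩
          have : ((k - 1 : ℤ) : ZMod (2 ^ a)) = 0 := by
            rw [ZMod.intCast_zmod_eq_zero_iff_dvd]; exact_mod_cast hdd
          push_cast at this; rw [hx2] at this; linear_combination this
        · right; right; left
          have hdd : ((2:ℕ) ^ a : ℤ) ∣ k - 1 - 2 ^ (a - 1) := by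
            push_cast
            exact ⟨u, by rw [hpow1]; rw [hs, hu]; ring⟩
          have : ((k - 1 - 2 ^ (a - 1) : ℤ) : ZMod (2 ^ a)) = 0 := by
            rw [ZMod.intCast_zmod_eq_zero_iff_dvd]; exact_mod_cast hdd
          push_cast at this
          rw [hx2] at this
          have hcc' : ((2 : ZMod (2 ^ a))) ^ (a - 1) = c := by
            rw [hc]; push_cast; ring
          rw [hcc'] at this
          linear_combination this
      · rcases Int.even_or_odd s with ⟨u, hu⟩ | ⟨u, hu⟩
        · right; left
          have hdd : ((2:ℕ) ^ a : ℤ) ∣ k + 1 := by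
            push_cast
            exact ⟨u, by rw [hpow1, hs, hu]; ring⟩
          have : ((k + 1 : ℤ) : ZMod (2 ^ a)) = 0 := by
            rw [ZMod.intCast_zmod_eq_zero_iff_dvd]; exact_mod_cast hdd
          push_cast at this; rw [hx2] at this; linear_combination this
        · right; right; right
          have hdd : ((2:ℕ) ^ a : ℤ) ∣ k + 1 - 2 ^ (a - 1) := by
            push_cast
            exact ⟨u, by rw [hpow1]; rw [hs, hu]; ring⟩
          have : ((k + 1 - 2 ^ (a - 1) : ℤ) : ZMod (2 ^ a)) = 0 := by
            rw [ZMod.intCast_zmod_eq_zero_iff_dvd]; exact_mod_cast hdd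
          push_cast at this
          rw [hx2] at this
          have hcc' : ((2 : ZMod (2 ^ a))) ^ (a - 1) = c := by
            rw [hc]; push_cast; ring
          rw [hcc'] at this
          linear_combination this
    · rintro (rfl | rfl | rfl | rfl)
      · ring
      · ring
      · linear_combination hc2 + h2c
      · linear_combination hc2 - h2c
  classical
  rw [sq1count, Nat.card_eq_fintype_card, Fintype.card_subtype]
  have hset : (univ.filter fun x : ZMod (2 ^ a) => x ^ 2 = 1) = {1, -1, c + 1, c - 1} := by
    ext x; simp [hiff x]
  -- the four nat representatives
  have e1 : ((1 : ℕ) : ZMod (2 ^ a)) = 1 := Nat.cast_one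
  have e2 : ((2 ^ a - 1 : ℕ) : ZMod (2 ^ a)) = -1 := by
    have h1 : (1:ℕ) ≤ 2 ^ a := Nat.one_le_two_pow
    push_cast [h1]
    have : ((2:ZMod (2 ^ a))) ^ a = ((2 ^ a : ℕ) : ZMod (2 ^ a)) := by push_cast; ring
    rw [this, ZMod.natCast_self]; ring
  have e3 : ((2 ^ (a - 1) + 1 : ℕ) : ZMod (2 ^ a)) = c + 1 := by rw [hc]; push_cast; ring
  have e4 : ((2 ^ (a - 1) - 1 : ℕ) : ZMod (2 ^ a)) = c - 1 := by
    have h1 : (1:ℕ) ≤ 2 ^ (a - 1) := Nat.one_le_two_pow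
    rw [hc]; push_cast [h1]; ring
  have hne : ∀ i j : ℕ, i < 2 ^ a → j < 2 ^ a → i ≠ j → ((i : ZMod (2 ^ a)) ≠ (j : ZMod (2 ^ a))) := by
    intro i j hi hj hij h
    exact hij (zmod_cast_inj hi hj h)
  have ne12 : (1 : ZMod (2 ^ a)) ≠ -1 := by
    rw [← e2, ← e1]; exact hne _ _ (by omega) (by omega) (by omega)
  have ne13 : (1 : ZMod (2 ^ a)) ≠ c + 1 := by
    rw [← e3, ← e1]; exact hne _ _ (by omega) (by omega) (by omega)
  have ne14 : (1 : ZMod (2 ^ a)) ≠ c - 1 := by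
    rw [← e4, ← e1]; exact hne _ _ (by omega) (by omega) (by omega)
  have ne23 : (-1 : ZMod (2 ^ a)) ≠ c + 1 := by
    rw [← e3, ← e2]; exact hne _ _ (by omega) (by omega) (by omega)
  have ne24 : (-1 : ZMod (2 ^ a)) ≠ c - 1 := by
    rw [← e4, ← e2]; exact hne _ _ (by omega) (by omega) (by omega)
  have ne34 : (c + 1 : ZMod (2 ^ a)) ≠ c - 1 := by
    rw [← e3, ← e4]; exact hne _ _ (by omega) (by omega) (by omega)
  rw [hset]
  rw [card_insert_of_notMem (by simp [ne12, ne13, ne14]),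
    card_insert_of_notMem (by simp [ne23, ne24]),
    card_insert_of_notMem (by simp [ne34]), card_singleton]

lemma card_fiber_ker {G H : Type*} [Group G] [Group H] (f : G →* H)
    (y : H) (g₀ : G) (hg₀ : f g₀ = y) :
    Nat.card {g : G // f g = y} = Nat.card f.ker := by
  refine Nat.card_congr ⟨fun g => ⟨g₀⁻¹ * g.1, ?_⟩, fun k => ⟨g₀ * k.1, ?_⟩, ?_, ?_⟩
  · simp [MonoidHom.mem_ker, map_mul, hg₀, g.2]
  · have := k.2
    rw [MonoidHom.mem_ker] at this
    simp [map_mul, hg₀, this]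
  · intro g; ext; simp
  · intro k; ext; simp

lemma card_preimage_surj {G H : Type*} [Group G] [Group H] [Finite G] [Finite H]
    (f : G →* H) (hf : Function.Surjective f) (p : H → Prop) :
    Nat.card {g : G // p (f g)} * Nat.card H = Nat.card {h : H // p h} * Nat.card G := by
  classical
  have hker : ∀ y : H, Nat.card {g : G // f g = y} = Nat.card f.ker := by
    intro y
    obtain ⟨g₀, hg₀⟩ := hf y
    exact card_fiber_ker f y g₀ hg₀
  have h1 : Nat.card {g : G // p (f g)} = Nat.card {h : H // p h} * Nat.card f.ker := by
    haveI : Fintype G := Fintype.ofFinite G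
    haveI : Fintype H := Fintype.ofFinite H
    haveI : DecidablePred p := Classical.decPred p
    haveI : DecidableEq H := Classical.decEq H
    rw [Nat.card_eq_fintype_card, Fintype.card_subtype]
    rw [Finset.card_eq_sum_card_fiberwise
      (f := fun g => f g) (t := Finset.univ.filter p)
      (fun x hx => by simpa using (Finset.mem_filter.mp hx).2)]
    have hterm : ∀ y ∈ Finset.univ.filter p,
        ((Finset.univ.filter fun g => p (f g)).filter fun g => f g = y).card
          = Nat.card f.ker := by
      intro y hy
      have hpy : p y := (Finset.mem_filter.mp hy).2
      have : ((Finset.univ.filter fun g => p (f g)).filter fun g => f g = y)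
          = Finset.univ.filter fun g => f g = y := by
        ext g
        simp only [Finset.mem_filter, Finset.mem_univ, true_and]
        exact ⟨fun h => h.2, fun h => ⟨h ▸ hpy, h⟩⟩
      rw [this, ← Fintype.card_subtype, ← Nat.card_eq_fintype_card]
      exact hker y
    rw [Finset.sum_congr rfl hterm, Finset.sum_const, smul_eq_mul]
    congr 1
    rw [Nat.card_eq_fintype_card, Fintype.card_subtype]
  have h2 : Nat.card f.ker * Nat.card H = Nat.card G := by
    have := Subgroup.card_eq_card_quotient_mul_card_subgroup f.ker
    have e2 : (G ⧸ f.ker) ≃ H := (QuotientGroup.quotientKerEquivOfSurjective f hf).toEquiv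
    rw [this, Nat.card_congr e2, mul_comm]
  rw [h1, mul_assoc, h2]

lemma units_sq1_card (d : ℕ) [NeZero d] :
    Nat.card {y : (ZMod d)ˣ // y ^ 2 = 1} = sq1count d := by
  refine Nat.card_congr
    ⟨fun y => ⟨(y.1 : ZMod d), ?_⟩,
     fun x => ⟨⟨x.1, x.1, by rw [← sq]; exact x.2, by rw [← sq]; exact x.2⟩, ?_⟩, ?_, ?_⟩
  · have h2 := y.2
    rw [← Units.val_pow_eq_pow_val, h2, Units.val_one]
  · apply Units.ext
    rw [Units.val_pow_eq_pow_val, Units.val_one]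
    exact x.2
  · intro y; exact Subtype.ext (Units.ext rfl)
  · intro x; exact Subtype.ext rfl

lemma zmod_pow_bridge {d : ℕ} [NeZero d] (k : ℕ) :
    ((k : ZMod d)) ^ 2 = 1 ↔ (d : ℤ) ∣ (k : ℤ) ^ 2 - 1 := by
  rw [← ZMod.intCast_zmod_eq_zero_iff_dvd]
  push_cast
  rw [sub_eq_zero]

lemma icc_mod_inj {n k₁ k₂ : ℕ} (h1 : k₁ ∈ Icc 1 n) (h2 : k₂ ∈ Icc 1 n)
    (h : k₁ % n = k₂ % n) : k₁ = k₂ := by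
  rw [mem_Icc] at h1 h2
  have e1 : k₁ % n = k₁ ∨ (k₁ = n ∧ k₁ % n = 0) := by
    rcases lt_or_eq_of_le h1.2 with hlt | heq
    · exact Or.inl (Nat.mod_eq_of_lt hlt)
    · exact Or.inr ⟨heq, by rw [heq, Nat.mod_self]⟩
  have e2 : k₂ % n = k₂ ∨ (k₂ = n ∧ k₂ % n = 0) := by
    rcases lt_or_eq_of_le h2.2 with hlt | heq
    · exact Or.inl (Nat.mod_eq_of_lt hlt)
    · exact Or.inr ⟨heq, by rw [heq, Nat.mod_self]⟩
  omega

lemma count_k (n d : ℕ) (hn : n ≠ 0) (hd : d ∣ n) :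
    (((Icc 1 n).filter (fun k => Nat.gcd k n = 1 ∧ (d:ℤ) ∣ (k:ℤ)^2 - 1)).card : ℕ)
      = Nat.card {u : (ZMod n)ˣ // (ZMod.unitsMap hd u) ^ 2 = 1} := by
  haveI : NeZero n := ⟨hn⟩
  haveI : NeZero d := ⟨fun h => hn (by simpa [h] using hd)⟩
  classical
  rw [Nat.card_eq_fintype_card, Fintype.card_subtype]
  refine Finset.card_bij (fun k hk => ZMod.unitOfCoprime k
    (by exact (Finset.mem_filter.mp hk).2.1)) ?_ ?_ ?_
  · intro k hk
    obtain ⟨hk1, hcop, hdvd⟩ := Finset.mem_filter.mp hk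
    simp only [Finset.mem_filter, Finset.mem_univ, true_and]
    have hcast : ((ZMod.unitsMap hd (ZMod.unitOfCoprime k hcop)) : ZMod d) = (k : ZMod d) := by
      rw [ZMod.unitsMap_def, Units.coe_map, MonoidHom.coe_coe, ZMod.coe_unitOfCoprime]
      exact map_natCast (ZMod.castHom hd (ZMod d)) k
    apply Units.ext
    rw [Units.val_pow_eq_pow_val, hcast, Units.val_one]
    exact (zmod_pow_bridge k).mpr hdvd
  · intro k1 hk1 k2 hk2 heq
    have : ((k1 : ZMod n)) = ((k2 : ZMod n)) := by
      have := congrArg (fun u : (ZMod n)ˣ => (u : ZMod n)) heq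
      simpa [ZMod.coe_unitOfCoprime] using this
    rw [ZMod.natCast_eq_natCast_iff] at this
    exact icc_mod_inj (Finset.mem_filter.mp hk1).1 (Finset.mem_filter.mp hk2).1 this
  · intro u hu
    have hP : (ZMod.unitsMap hd u) ^ 2 = 1 := by
      simpa using (Finset.mem_filter.mp hu).2
    set v := (u : ZMod n).val with hv
    have hcop : Nat.Coprime v n := ZMod.val_coe_unit_coprime u
    rcases eq_or_ne v 0 with hv0 | hv0
    · -- then n = 1
      have hn1 : n = 1 := by
        have := hcop
        rw [hv0] at this
        simpa [Nat.coprime_zero_left] using this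
      subst hn1
      refine ⟨1, ?_, ?_⟩
      · simp [Finset.mem_filter]
      · exact Subsingleton.elim _ _
    · have hvlt : v < n := ZMod.val_lt _
      have hv1 : 1 ≤ v := Nat.one_le_iff_ne_zero.mpr hv0
      have hvu : ((v : ℕ) : ZMod n) = (u : ZMod n) := by
        rw [hv]; exact ZMod.natCast_val _ |>.trans (ZMod.cast_id _ _)
      refine ⟨v, ?_, ?_⟩
      · rw [Finset.mem_filter, Finset.mem_Icc]
        refine ⟨⟨hv1, hvlt.le⟩, hcop, ?_⟩
        rw [← zmod_pow_bridge]
        have : ((v : ℕ) : ZMod d) = ((ZMod.unitsMap hd u : (ZMod d)ˣ) : ZMod d) := by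
          rw [ZMod.unitsMap_def, Units.coe_map, MonoidHom.coe_coe, ← hvu]
          exact (map_natCast (ZMod.castHom hd (ZMod d)) v).symm
        rw [this, ← Units.val_pow_eq_pow_val, hP, Units.val_one]
      · apply Units.ext
        rw [ZMod.coe_unitOfCoprime]
        exact hvu

noncomputable def gfun : ArithmeticFunction ℚ :=
  ⟨fun d => (sq1count d : ℚ) * d / (Nat.totient d : ℚ), by simp⟩

lemma gfun_apply (d : ℕ) : gfun d = (sq1count d : ℚ) * d / (Nat.totient d : ℚ) := rfl

lemma gfun_one : gfun 1 = 1 := by rw [gfun_apply, sq1count_one]; simp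

lemma gfun_mult : gfun.IsMultiplicative := by
  constructor
  · exact gfun_one
  · intro a b hab
    rcases eq_or_ne a 0 with rfl | ha
    · have : b = 1 := by simpa using hab
      subst this; simp [gfun_apply, gfun_one]
    rcases eq_or_ne b 0 with rfl | hb
    · have : a = 1 := by simpa [Nat.coprime_zero_right] using hab
      subst this; simp [gfun_apply, gfun_one]
    have hta : (Nat.totient a : ℚ) ≠ 0 := by
      exact_mod_cast (Nat.totient_pos.mpr (Nat.pos_of_ne_zero ha)).ne'
    have htb : (Nat.totient b : ℚ) ≠ 0 := by
      exact_mod_cast (Nat.totient_pos.mpr (Nat.pos_of_ne_zero hb)).ne'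
    rw [gfun_apply, gfun_apply, gfun_apply, sq1count_mul hab, Nat.totient_mul hab]
    push_cast
    field_simp

lemma moebius_coe_apply (k : ℕ) : ((μ : ArithmeticFunction ℚ)) k = ((μ k : ℤ) : ℚ) :=
  intCoe_apply

lemma hfun_prime_pow {p a : ℕ} (hp : p.Prime) (ha : a ≠ 0) :
    (gfun * (μ : ArithmeticFunction ℚ)) (p ^ a) = gfun (p ^ a) - gfun (p ^ (a - 1)) := by
  rw [mul_apply, Nat.sum_divisorsAntidiagonal (f := fun x y => gfun x * (μ : ArithmeticFunction ℚ) y),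
    Nat.sum_divisors_prime_pow hp]
  have hterm : ∀ e, e ≤ a → (μ : ArithmeticFunction ℚ) (p ^ a / p ^ e) = ((μ (p ^ (a - e)) : ℤ) : ℚ) := by
    intro e he
    rw [Nat.pow_div he hp.pos, moebius_coe_apply]
  have hsplit : a + 1 = (a - 1) + 1 + 1 := by omega
  rw [hsplit, Finset.sum_range_succ, Finset.sum_range_succ]
  have h1 : (a - 1) + 1 = a := by omega
  rw [h1]
  have t1 : (μ : ArithmeticFunction ℚ) (p ^ a / p ^ a) = 1 := by
    rw [hterm a le_rfl]; simp
  have t2 : (μ : ArithmeticFunction ℚ) (p ^ a / p ^ (a - 1)) = -1 := by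
    rw [hterm (a - 1) (by omega), show a - (a - 1) = 1 by omega, pow_one,
      ArithmeticFunction.moebius_apply_prime hp]
    norm_num
  have t3 : ∀ e ∈ Finset.range (a - 1), gfun (p ^ e) * (μ : ArithmeticFunction ℚ) (p ^ a / p ^ e) = 0 := by
    intro e he
    rw [Finset.mem_range] at he
    rw [hterm e (by omega), ArithmeticFunction.moebius_apply_prime_pow hp (by omega : a - e ≠ 0),
      if_neg (by omega)]
    simp
  rw [Finset.sum_congr rfl t3, Finset.sum_const, t1, t2]
  simp
  ring

noncomputable def Ffun : ArithmeticFunction ℚ :=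
  ⟨fun n => (Nat.totient n : ℚ) * ((gfun * (μ : ArithmeticFunction ℚ)) n), by simp⟩

lemma Ffun_apply (n : ℕ) :
    Ffun n = (Nat.totient n : ℚ) * ((gfun * (μ : ArithmeticFunction ℚ)) n) := rfl

lemma hfun_mult : (gfun * (μ : ArithmeticFunction ℚ)).IsMultiplicative :=
  gfun_mult.mul (isMultiplicative_moebius.intCast)

lemma Ffun_mult : Ffun.IsMultiplicative := by
  constructor
  · rw [Ffun_apply]; simp [hfun_mult.map_one]
  · intro a b hab
    rw [Ffun_apply, Ffun_apply, Ffun_apply, Nat.totient_mul hab,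
      hfun_mult.map_mul_of_coprime hab]
    push_cast
    ring

lemma gfun_odd_prime_pow {p a : ℕ} (hp : p.Prime) (hp2 : p ≠ 2) (ha : a ≠ 0) :
    gfun (p ^ a) = 2 * p / ((p : ℚ) - 1) := by
  have hp1 : (1:ℕ) ≤ p := hp.one_le
  have hpq : (p:ℚ) ≠ 0 := by exact_mod_cast hp.pos.ne'
  have hpq1 : (p:ℚ) - 1 ≠ 0 := by
    have : (2:ℚ) ≤ p := by exact_mod_cast hp.two_le
    linarith
  rw [gfun_apply, sq1count_odd_prime_pow hp hp2 ha,
    Nat.totient_prime_pow hp (Nat.pos_of_ne_zero ha)]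
  have hps : (p:ℚ) ^ a = (p:ℚ) ^ (a - 1) * p := by
    rw [← pow_succ]; congr 1; omega
  push_cast [hp1]
  rw [hps]
  have hpow : (p:ℚ) ^ (a-1) ≠ 0 := pow_ne_zero _ hpq
  field_simp

lemma gfun_two_pow_big {a : ℕ} (ha : 3 ≤ a) : gfun (2 ^ a) = 8 := by
  rw [gfun_apply, sq1count_two_pow ha, Nat.totient_prime_pow Nat.prime_two (by omega)]
  have hps : (2:ℚ) ^ a = (2:ℚ) ^ (a - 1) * 2 := by
    rw [← pow_succ]; congr 1; omega
  push_cast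
  rw [hps]
  have hpow : (2:ℚ) ^ (a-1) ≠ 0 := pow_ne_zero _ two_ne_zero
  field_simp
  ring

lemma gfun_two : gfun 2 = 2 := by rw [gfun_apply, sq1count_two]; norm_num [Nat.totient_prime Nat.prime_two]

lemma gfun_four : gfun 4 = 4 := by
  rw [gfun_apply, sq1count_four]
  norm_num [show Nat.totient 4 = 2 from rfl]

lemma Ffun_odd_prime {p : ℕ} (hp : p.Prime) (hp2 : p ≠ 2) : Ffun p = p + 1 := by
  have h := hfun_prime_pow (a := 1) hp one_ne_zero
  rw [pow_one, show (1:ℕ) - 1 = 0 from rfl, pow_zero] at h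
  have hg := gfun_odd_prime_pow (a := 1) hp hp2 one_ne_zero
  rw [pow_one] at hg
  rw [Ffun_apply, h, hg, gfun_one, Nat.totient_prime hp]
  have hp1 : (1:ℕ) ≤ p := hp.one_le
  have hpq1 : (p:ℚ) - 1 ≠ 0 := by
    have : (2:ℚ) ≤ p := by exact_mod_cast hp.two_le
    linarith
  push_cast [hp1]
  field_simp
  ring

lemma Ffun_odd_prime_pow_zero {p a : ℕ} (hp : p.Prime) (hp2 : p ≠ 2) (ha : 2 ≤ a) :
    Ffun (p ^ a) = 0 := by
  rw [Ffun_apply, hfun_prime_pow hp (by omega),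
    gfun_odd_prime_pow hp hp2 (by omega), gfun_odd_prime_pow hp hp2 (by omega)]
  simp

lemma Ffun_two : Ffun 2 = 1 := by
  have h := hfun_prime_pow (p := 2) (a := 1) Nat.prime_two one_ne_zero
  rw [pow_one, pow_zero] at h
  rw [Ffun_apply, h, gfun_two, gfun_one, Nat.totient_prime Nat.prime_two]
  norm_num

lemma Ffun_four : Ffun 4 = 4 := by
  have h := hfun_prime_pow (p := 2) (a := 2) Nat.prime_two two_ne_zero
  rw [show (2:ℕ)^(2-1) = 2 from rfl, show (2:ℕ)^2 = 4 from rfl] at h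
  rw [Ffun_apply, h, gfun_four, gfun_two, show Nat.totient 4 = 2 from rfl]
  norm_num

lemma Ffun_eight : Ffun 8 = 16 := by
  have h := hfun_prime_pow (p := 2) (a := 3) Nat.prime_two three_ne_zero
  rw [show (2:ℕ)^(3-1) = 4 from rfl, show (2:ℕ)^3 = 8 from rfl] at h
  have g8 : gfun 8 = 8 := by
    have := gfun_two_pow_big (le_refl 3); rwa [show (2:ℕ)^3 = 8 from rfl] at this
  rw [Ffun_apply, h, g8, gfun_four, show Nat.totient 8 = 4 from rfl]
  norm_num

lemma Ffun_two_pow_zero {a : ℕ} (ha : 4 ≤ a) : Ffun (2 ^ a) = 0 := by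
  rw [Ffun_apply, hfun_prime_pow Nat.prime_two (by omega),
    gfun_two_pow_big (by omega), gfun_two_pow_big (by omega)]
  simp

lemma count_val (n d : ℕ) (hn : n ≠ 0) (hd : d ∣ n) :
    ((((Icc 1 n).filter (fun k => Nat.gcd k n = 1 ∧ (d:ℤ) ∣ (k:ℤ)^2 - 1)).card : ℚ))
      = (Nat.totient n : ℚ) * (sq1count d : ℚ) / (Nat.totient d : ℚ) := by
  haveI : NeZero n := ⟨hn⟩
  haveI : NeZero d := ⟨fun h => hn (by simpa [h] using hd)⟩
  have hmain := card_preimage_surj (ZMod.unitsMap hd) (ZMod.unitsMap_surjective hd)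
    (fun y => y ^ 2 = 1)
  have hcardd : Nat.card (ZMod d)ˣ = Nat.totient d := by
    rw [Nat.card_eq_fintype_card, ZMod.card_units_eq_totient]
  have hcardn : Nat.card (ZMod n)ˣ = Nat.totient n := by
    rw [Nat.card_eq_fintype_card, ZMod.card_units_eq_totient]
  have hNat : ((Icc 1 n).filter
        (fun k => Nat.gcd k n = 1 ∧ (d:ℤ) ∣ (k:ℤ)^2 - 1)).card * Nat.totient d
      = sq1count d * Nat.totient n := by
    rw [count_k n d hn hd, ← hcardd, ← hcardn, ← units_sq1_card d]
    exact hmain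
  have htd : (Nat.totient d : ℚ) ≠ 0 := by
    exact_mod_cast (Nat.totient_pos.mpr (Nat.pos_of_ne_zero (NeZero.ne d))).ne'
  rw [eq_div_iff htd]
  have := congrArg (fun x : ℕ => (x : ℚ)) hNat
  push_cast at this
  rw [this]; ring

lemma ram_expand (n : ℕ) (hn : n ≠ 0) (x : ℤ) :
    ((ramanujanSum n x : ℤ) : ℚ)
      = ∑ d ∈ n.divisors, (if (d:ℤ) ∣ x then (d:ℚ) * ((μ (n/d) : ℤ) : ℚ) else 0) := by
  have hset : (Int.gcd x n).divisors = n.divisors.filter (fun d : ℕ => ((d:ℤ) ∣ x)) := by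
    ext d
    simp only [Nat.mem_divisors, Finset.mem_filter]
    constructor
    · rintro ⟨hdg, _⟩
      have hdz : (d : ℤ) ∣ (Int.gcd x n : ℤ) := Int.natCast_dvd_natCast.mpr hdg
      refine ⟨⟨?_, hn⟩, dvd_trans hdz (Int.gcd_dvd_left _ _)⟩
      have := dvd_trans hdz (Int.gcd_dvd_right _ _)
      exact_mod_cast this
    · rintro ⟨⟨hdn, _⟩, hdx⟩
      constructor
      · have : (d : ℤ) ∣ (Int.gcd x n : ℤ) :=
          Int.dvd_coe_gcd hdx (Int.natCast_dvd_natCast.mpr hdn)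
        exact_mod_cast this
      · intro h0
        rw [Int.gcd_eq_zero_iff] at h0
        exact hn (by exact_mod_cast h0.2)
  rw [ramanujanSum, hset, Finset.sum_filter]
  push_cast
  rfl

lemma main_sum (n : ℕ) (hn : 0 < n) :
    ∑ k ∈ (Icc 1 n).filter (fun k => Nat.gcd k n = 1),
      (ramanujanSum n ((k : ℤ) ^ 2 - 1) : ℚ) = Ffun n := by
  classical
  have hn0 : n ≠ 0 := hn.ne'
  refine Eq.trans (Finset.sum_congr rfl fun k _ => ram_expand n hn0 ((k:ℤ)^2 - 1)) ?_
  rw [Finset.sum_comm]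
  have step : ∀ d ∈ n.divisors,
      (∑ k ∈ (Icc 1 n).filter (fun k => Nat.gcd k n = 1),
        if (d:ℤ) ∣ (k:ℤ)^2 - 1 then (d:ℚ) * ((μ (n/d) : ℤ):ℚ) else 0)
      = ((Nat.totient n : ℚ) * (sq1count d : ℚ) / (Nat.totient d : ℚ))
          * ((d:ℚ) * ((μ (n/d):ℤ):ℚ)) := by
    intro d hd
    rw [← Finset.sum_filter, Finset.filter_filter, Finset.sum_const, nsmul_eq_mul]
    rw [count_val n d hn0 (Nat.mem_divisors.mp hd).1]
  rw [Finset.sum_congr rfl step]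
  rw [Ffun_apply, mul_apply,
    Nat.sum_divisorsAntidiagonal (f := fun x y => gfun x * (μ : ArithmeticFunction ℚ) y),
    Finset.mul_sum]
  refine Finset.sum_congr rfl ?_
  intro d hd
  rw [gfun_apply, intCoe_apply]
  ring

theorem eval_R_quadratic (n : ℕ) (hn : 0 < n) (j m : ℕ) (hm : Odd m)
    (hnjm : n = 2 ^ j * m) :
    ∑ k ∈ (Icc 1 n).filter (fun k => Nat.gcd k n = 1),
      (ramanujanSum n ((k : ℤ) ^ 2 - 1) : ℚ) =
    if j ≤ 3 ∧ Squarefree m then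
      (if j ≤ 1 then 1 else if j = 2 then 4 else 16) *
        ((m : ℚ) * ∏ p ∈ m.primeFactors, (1 + 1 / (p : ℚ)))
    else 0 := by
  subst hnjm
  have hm0 : m ≠ 0 := by
    rintro rfl
    simp at hn
  have hcop : Nat.Coprime (2 ^ j) m := Nat.Coprime.pow_left _ (Nat.coprime_two_left.mpr hm)
  rw [main_sum _ hn, Ffun_mult.map_mul_of_coprime hcop]
  have hodd_prime : ∀ p ∈ m.primeFactors, p ≠ 2 := by
    intro p hp hp2
    obtain ⟨hpp, hpd, -⟩ := Nat.mem_primeFactors.mp hp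
    rw [hp2] at hpd
    rw [Nat.odd_iff] at hm
    omega
  by_cases hsq : j ≤ 3 ∧ Squarefree m
  · obtain ⟨hj, hsf⟩ := hsq
    rw [if_pos ⟨hj, hsf⟩]
    -- compute Ffun m
    have hFm : Ffun m = ∏ p ∈ m.primeFactors, ((p : ℚ) + 1) := by
      rw [Ffun_mult.multiplicative_factorization Ffun hm0, Finsupp.prod,
        Nat.support_factorization]
      refine Finset.prod_congr rfl fun p hp => ?_
      have hpp : p.Prime := Nat.prime_of_mem_primeFactors hp
      have h1 : m.factorization p = 1 := by
        have hle : m.factorization p ≤ 1 := hsf.natFactorization_le_one p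
        have hne : m.factorization p ≠ 0 := by
          rw [← Finsupp.mem_support_iff, Nat.support_factorization]
          exact hp
        omega
      rw [h1, pow_one, Ffun_odd_prime hpp (hodd_prime p hp)]
    have hrhs : (m : ℚ) * ∏ p ∈ m.primeFactors, (1 + 1/(p:ℚ))
        = ∏ p ∈ m.primeFactors, ((p:ℚ) + 1) := by
      have hmprod : (∏ p ∈ m.primeFactors, (p:ℚ)) = (m:ℚ) := by
        rw [← Nat.cast_prod]
        exact_mod_cast congrArg (Nat.cast (R := ℚ)) (Nat.prod_primeFactors_of_squarefree hsf)
      rw [← hmprod, ← Finset.prod_mul_distrib]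
      refine Finset.prod_congr rfl fun p hp => ?_
      have hp0 : (p:ℚ) ≠ 0 := by
        exact_mod_cast (Nat.prime_of_mem_primeFactors hp).pos.ne'
      field_simp
    rw [hFm, hrhs]
    interval_cases j
    · norm_num [Ffun_mult.map_one]
    · norm_num [show (2:ℕ)^1 = 2 from rfl, Ffun_two]
    · norm_num [show (2:ℕ)^2 = 4 from rfl, Ffun_four]
    · norm_num [show (2:ℕ)^3 = 8 from rfl, Ffun_eight]
  · rw [if_neg hsq]
    rcases Nat.lt_or_ge 3 j with hj4 | hj3
    · rw [Ffun_two_pow_zero (by omega), zero_mul]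
    · have hnsf : ¬ Squarefree m := fun h => hsq ⟨hj3, h⟩
      obtain ⟨p, hpp, hpd⟩ := by
        rw [Nat.squarefree_iff_prime_squarefree] at hnsf
        push_neg at hnsf
        exact hnsf
      have hppn : p.Prime := hpp
      have hpm : p ∈ m.primeFactors :=
        Nat.mem_primeFactors.mpr ⟨hppn, dvd_trans (dvd_mul_right p p) hpd, hm0⟩
      have hp2 : p ≠ 2 := hodd_prime p hpm
      have hv2 : 2 ≤ m.factorization p := by
        rw [← Nat.Prime.pow_dvd_iff_le_factorization hppn hm0, pow_two]
        exact hpd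
      have hFm : Ffun m = 0 := by
        rw [Ffun_mult.multiplicative_factorization Ffun hm0, Finsupp.prod,
          Nat.support_factorization]
        exact Finset.prod_eq_zero hpm (Ffun_odd_prime_pow_zero hppn hp2 hv2)
      rw [hFm, mul_zero]
end

section
/- Let p be a prime and e_1,…,e_r ≥ 1 with e := e_1 = … = e_s > e_{s+1} ≥ … ≥ e_r ≥ 1 (1 ≤ s ≤ r). Define R(p^{e_1},…,p^{e_r}) = Σ_{1 ≤ k ≤ p^e, gcd(k,p)=1} c_{p^{e_1}}(k−1)···c_{p^{e_r}}(k−1). Then R(p^{e_1},…,p^{e_r}) = p^{v+e}(p−1)^{r−s+1} h_s(p) if e > 1, where v = (Σ_j e_j) − r − e + 1 and h_s(x) = ((x−1)^{s−1} + (−1)^s)/x; and R(p,…,p) = (p−1)^r + (−1)^r (p−2) if e = 1. -/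
open Finset ArithmeticFunction

lemma S_eval' (p a c : ℕ) (hp : p.Prime) (ha : 1 ≤ a) (hc : c ≤ a) :
    ∑ i ∈ range (c + 1), (p : ℤ) ^ i * moebius (p ^ (a - i)) =
      (if c = a then (p : ℤ) ^ a else 0) + (if a - 1 ≤ c then -(p : ℤ) ^ (a - 1) else 0) := by
  have h1 : ∀ i ∈ range (c + 1), (p : ℤ) ^ i * moebius (p ^ (a - i)) =
      (if i = a then (p : ℤ) ^ a else 0) + (if i = a - 1 then -(p : ℤ) ^ (a - 1) else 0) := by
    intro i hi
    simp only [mem_range] at hi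
    rcases eq_or_ne i a with rfl | hia
    · rw [if_pos rfl, if_neg (by omega), Nat.sub_self]
      simp
    · rw [if_neg hia]
      rcases eq_or_ne i (a - 1) with rfl | hia1
      · rw [if_pos rfl, moebius_apply_prime_pow hp (by omega), if_pos (by omega)]
        ring
      · rw [if_neg hia1, moebius_apply_prime_pow hp (by omega), if_neg (by omega)]
        simp
  rw [Finset.sum_congr rfl h1, Finset.sum_add_distrib, Finset.sum_ite_eq', Finset.sum_ite_eq']
  have e1 : a ∈ range (c + 1) ↔ c = a := by rw [mem_range]; omega
  have e2 : a - 1 ∈ range (c + 1) ↔ a - 1 ≤ c := by rw [mem_range]; omega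
  simp only [e1, e2]

lemma rs_eq_s16 (p a : ℕ) (hp : p.Prime) (ha : 1 ≤ a) (m : ℤ) :
    ramanujanSum (p ^ a) m =
      if (p : ℤ) ^ a ∣ m then (p : ℤ) ^ (a - 1) * (p - 1)
      else if (p : ℤ) ^ (a - 1) ∣ m then -(p : ℤ) ^ (a - 1) else 0 := by
  have hpz : Prime (p : ℤ) := Nat.prime_iff_prime_int.1 hp
  have hg : Int.gcd m ((p ^ a : ℕ) : ℤ) ∣ p ^ a := by
    have := Int.gcd_dvd_right (a := m) (b := ((p ^ a : ℕ) : ℤ))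
    exact_mod_cast this
  obtain ⟨c, hc, hgc⟩ := (Nat.dvd_prime_pow hp).mp hg
  have key : ∀ b : ℕ, b ≤ a → ((p : ℤ) ^ b ∣ m ↔ b ≤ c) := by
    intro b hb
    constructor
    · intro hdvd
      have h2 : (p : ℤ) ^ b ∣ (Int.gcd m ((p ^ a : ℕ) : ℤ) : ℤ) :=
        Int.dvd_coe_gcd hdvd (by push_cast; exact pow_dvd_pow _ hb)
      rw [hgc] at h2
      have h3 : p ^ b ∣ p ^ c := by exact_mod_cast h2
      exact (Nat.pow_dvd_pow_iff_le_right hp.one_lt).mp h3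
    · intro hbc
      calc (p : ℤ) ^ b ∣ (p : ℤ) ^ c := pow_dvd_pow _ hbc
        _ = ((Int.gcd m ((p ^ a : ℕ) : ℤ) : ℕ) : ℤ) := by rw [hgc]; push_cast; ring
        _ ∣ m := Int.gcd_dvd_left _ _
  unfold ramanujanSum
  rw [hgc, Nat.sum_divisors_prime_pow hp]
  have hdiv : ∀ i ∈ range (c + 1), ((p ^ i : ℕ) : ℤ) * moebius (p ^ a / p ^ i) =
      (p : ℤ) ^ i * moebius (p ^ (a - i)) := by
    intro i hi
    simp only [mem_range] at hi
    rw [Nat.pow_div (by omega) hp.pos]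
    push_cast; ring
  rw [Finset.sum_congr rfl hdiv, S_eval' p a c hp ha hc,
    if_congr (key a le_rfl) rfl rfl, if_congr (key (a - 1) (by omega)) rfl rfl]
  have hpow : (p : ℤ) ^ a = (p : ℤ) ^ (a - 1) * p := by
    rw [← pow_succ]; congr 1; omega
  split_ifs <;> try omega
  · linear_combination hpow

theorem eval_R_prime_powers (p : ℕ) (hp : p.Prime) (r s E : ℕ)
    (hs1 : 1 ≤ s) (hsr : s ≤ r) (e : Fin r → ℕ)
    (he1 : ∀ i, 1 ≤ e i)
    (heE : ∀ i : Fin r, (i : ℕ) < s → e i = E)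
    (heL : ∀ i : Fin r, s ≤ (i : ℕ) → e i < E)
    (hanti : ∀ i j : Fin r, i ≤ j → e j ≤ e i) :
    (1 < E →
      (((∑ k ∈ (Icc 1 (p ^ E)).filter (fun k => Nat.gcd k p = 1),
          ∏ i, ramanujanSum (p ^ e i) ((k : ℤ) - 1)) : ℤ) : ℚ) =
        (p : ℚ) ^ (((∑ i, (e i : ℤ)) - r - E + 1) + E) *
          ((p : ℚ) - 1) ^ (r - s + 1) *
          ((((p : ℚ) - 1) ^ (s - 1) + (-1) ^ s) / (p : ℚ))) ∧
    (E = 1 →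
      (∑ k ∈ (Icc 1 (p ^ E)).filter (fun k => Nat.gcd k p = 1),
          ∏ i, ramanujanSum (p ^ e i) ((k : ℤ) - 1)) =
        ((p : ℤ) - 1) ^ r + (-1) ^ r * ((p : ℤ) - 2)) := by
  refine ⟨fun hE => ?_, fun hE1 => ?_⟩
  · have hp2 : 2 ≤ p := hp.two_le
    have hr1 : 1 ≤ r := hs1.trans hsr
    have hP1 : 1 ≤ p ^ (E - 1) := Nat.one_le_pow _ _ (by omega)
    set S := (Icc 1 (p ^ E)).filter (fun k => Nat.gcd k p = 1) with hS
    set f : ℕ → ℤ := fun k => ∏ i, ramanujanSum (p ^ e i) ((k : ℤ) - 1) with hf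
    -- step A : terms with ¬ p^(E-1) ∣ k-1 vanish
    have hzero : ∀ k ∈ S, f k ≠ 0 → p ^ (E - 1) ∣ k - 1 := by
      intro k hk hfk
      by_contra hnd
      apply hfk
      have hk1 : 1 ≤ k := by
        simp only [hS, mem_filter, mem_Icc] at hk; exact hk.1.1
      have hndz : ¬ ((p : ℤ) ^ (E - 1) ∣ (k : ℤ) - 1) := by
        intro hd
        apply hnd
        have : ((k : ℤ) - 1) = ((k - 1 : ℕ) : ℤ) := by omega
        rw [this] at hd
        exact_mod_cast (by exact_mod_cast hd : ((p ^ (E-1) : ℕ) : ℤ) ∣ ((k - 1 : ℕ) : ℤ))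
      apply Finset.prod_eq_zero (Finset.mem_univ (⟨0, by omega⟩ : Fin r))
      rw [heE ⟨0, by omega⟩ (by show 0 < s; omega), rs_eq_s16 p E hp (by omega)]
      rw [if_neg (fun hd => hndz (dvd_trans (pow_dvd_pow _ (by omega)) hd)), if_neg hndz]
    rw [← Finset.sum_filter_of_ne hzero]
    -- step B : identify the remaining set
    have hset : S.filter (fun k => p ^ (E - 1) ∣ k - 1) =
        (range p).image (fun j => 1 + j * p ^ (E - 1)) := by
      ext k
      simp only [hS, mem_filter, mem_Icc, mem_image, mem_range]
      constructor
      · rintro ⟨⟨⟨h1, h2⟩, h3⟩, j, hj⟩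
        rw [Nat.mul_comm] at hj
        refine ⟨j, ?_, by omega⟩
        by_contra hjp
        have h4 : p * p ^ (E - 1) ≤ j * p ^ (E - 1) := Nat.mul_le_mul_right _ (by omega)
        have hpe : p * p ^ (E - 1) = p ^ E := by
          rw [← pow_succ']; congr 1; omega
        omega
      · rintro ⟨j, hj, rfl⟩
        have hle : 1 + j * p ^ (E - 1) ≤ p ^ E := by
          have h1 : (j + 1) * p ^ (E - 1) ≤ p * p ^ (E - 1) := Nat.mul_le_mul_right _ (by omega)
          have h2 : (j + 1) * p ^ (E - 1) = j * p ^ (E - 1) + p ^ (E - 1) := by ring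
          have h3 : p * p ^ (E - 1) = p ^ E := by
            rw [← pow_succ']; congr 1; omega
          omega
        refine ⟨⟨⟨by omega, hle⟩, ?_⟩, by
          rw [Nat.add_sub_cancel_left]; exact dvd_mul_left _ _⟩
        have : j * p ^ (E - 1) = (j * p ^ (E - 2)) * p := by
          rw [mul_assoc, ← pow_succ]
          congr 2
          omega
        rw [this]
        exact (Nat.coprime_add_mul_right_left 1 p _).mpr (Nat.coprime_one_left p)
    rw [hset, Finset.sum_image (by
      intro a _ b _ hab
      have := Nat.eq_of_mul_eq_mul_right (show 0 < p ^ (E-1) by omega) (by simp only at hab; omega : a * p ^ (E-1) = b * p ^ (E-1))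
      exact this)]
    -- step C : evaluate f (1 + j * p^(E-1))
    have hm : ∀ j : ℕ, ((1 + j * p ^ (E - 1) : ℕ) : ℤ) - 1 = (j : ℤ) * (p : ℤ) ^ (E - 1) := by
      intro j; push_cast; ring
    have hterm0 : f (1 + 0 * p ^ (E - 1)) = ∏ i, (p : ℤ) ^ (e i - 1) * ((p : ℤ) - 1) := by
      rw [hf]
      refine Finset.prod_congr rfl fun i _ => ?_
      rw [hm 0, rs_eq_s16 p (e i) hp (he1 i), if_pos (by simp)]
    have hterm1 : ∀ j ∈ Ico 1 p, f (1 + j * p ^ (E - 1)) =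
        ∏ i : Fin r, (if (i : ℕ) < s then -(p : ℤ) ^ (E - 1) else (p : ℤ) ^ (e i - 1) * ((p : ℤ) - 1)) := by
      intro j hj
      simp only [mem_Ico] at hj
      rw [hf]
      refine Finset.prod_congr rfl fun i _ => ?_
      rw [hm j]
      by_cases his : (i : ℕ) < s
      · rw [if_pos his, heE i his, rs_eq_s16 p E hp (by omega)]
        have hnd : ¬ ((p : ℤ) ^ E ∣ (j : ℤ) * (p : ℤ) ^ (E - 1)) := by
          intro hd
          have hE' : (p : ℤ) ^ E = (p : ℤ) ^ (E - 1) * p := by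
            rw [← pow_succ]; congr 1; omega
          rw [hE', mul_comm ((j : ℤ))] at hd
          have hpj : (p : ℤ) ∣ (j : ℤ) :=
            (mul_dvd_mul_iff_left (a := (p : ℤ) ^ (E - 1)) (by positivity)).mp hd
          have : p ∣ j := by exact_mod_cast hpj
          have := Nat.le_of_dvd (by omega) this
          omega
        rw [if_neg hnd, if_pos (Dvd.intro_left _ rfl)]
      · rw [if_neg his]
        have hie : e i ≤ E - 1 := by have := heL i (by omega); omega
        rw [rs_eq_s16 p (e i) hp (he1 i), if_pos (dvd_mul_of_dvd_right (pow_dvd_pow _ hie) _)]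
    -- step D : sum = term0 + (p-1) * T1
    have hrange : range p = insert 0 (Ico 1 p) := by
      ext k; simp only [mem_range, mem_insert, mem_Ico]; omega
    rw [hrange, Finset.sum_insert (by simp), hterm0, Finset.sum_congr rfl hterm1,
      Finset.sum_const, Nat.card_Ico, nsmul_eq_mul]
    -- step E : algebra
    push_cast
    set q : ℚ := (p : ℚ) with hq
    have hq0 : q ≠ 0 := by positivity
    -- split products
    have hsplit : (∏ i : Fin r, (if (i : ℕ) < s then -q ^ (E - 1) else q ^ (e i - 1) * (q - 1))) =
        (-q ^ (E - 1)) ^ s * ((∏ i ∈ univ.filter (fun i : Fin r => ¬ (i : ℕ) < s), q ^ (e i - 1)) * (q - 1) ^ (r - s)) := by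
      rw [Finset.prod_ite, Finset.prod_const, Finset.prod_mul_distrib, Finset.prod_const]
      have hcard1 : (univ.filter (fun i : Fin r => (i : ℕ) < s)).card = s := by
        have : (univ.filter (fun i : Fin r => (i : ℕ) < s)) =
            Finset.attachFin (range s) (fun m hm => (mem_range.mp hm).trans_le hsr) := by
          ext i; simp [Finset.mem_attachFin]
        rw [this, Finset.card_attachFin, card_range]
      have hcard2 : (univ.filter (fun i : Fin r => ¬ (i : ℕ) < s)).card = r - s := by
        have := Finset.card_filter_add_card_filter_not
          (s := (univ : Finset (Fin r))) (p := fun i : Fin r => (i : ℕ) < s)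
        rw [card_univ, Fintype.card_fin, hcard1] at this
        omega
      rw [hcard1, hcard2]
    rw [hsplit]
    -- powers to sums
    have hpows : ∀ t : Finset (Fin r), (∏ i ∈ t, q ^ (e i - 1)) = q ^ (∑ i ∈ t, (e i - 1)) :=
      fun t => Finset.prod_pow_eq_pow_sum t _ _
    set N : ℕ := ∑ i : Fin r, (e i - 1) with hN
    set N2 : ℕ := ∑ i ∈ univ.filter (fun i : Fin r => ¬ (i : ℕ) < s), (e i - 1) with hN2
    have hNsplit : N = s * (E - 1) + N2 := by
      rw [hN, ← Finset.sum_filter_add_sum_filter_not univ (fun i : Fin r => (i : ℕ) < s)]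
      congr 1
      rw [Finset.sum_congr rfl (fun i hi => by rw [heE i (mem_filter.mp hi).2]),
        Finset.sum_const, smul_eq_mul]
      congr 1
      have : (univ.filter (fun i : Fin r => (i : ℕ) < s)) =
          Finset.attachFin (range s) (fun m hm => (mem_range.mp hm).trans_le hsr) := by
        ext i; simp [Finset.mem_attachFin]
      rw [this, Finset.card_attachFin, card_range]
    have hZ : (((∑ i, (e i : ℤ)) - r - E + 1) + E) = ((N + 1 : ℕ) : ℤ) := by
      have h1 : ((N : ℕ) : ℤ) = ∑ i : Fin r, ((e i : ℤ) - 1) := by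
        rw [hN]
        push_cast [Nat.cast_sum]
        refine Finset.sum_congr rfl fun i _ => ?_
        have := he1 i
        omega
      rw [Finset.sum_sub_distrib, Finset.sum_const, card_univ, Fintype.card_fin] at h1
      simp only [nsmul_eq_mul, mul_one] at h1
      push_cast
      omega
    rw [Finset.prod_mul_distrib, Finset.prod_const, hpows univ, hZ, zpow_natCast]
    rw [hpows]
    rw [← hN, ← hN2, card_univ, Fintype.card_fin]
    have hc : ((p - 1 : ℕ) : ℚ) = q - 1 := by
      rw [Nat.cast_sub (by omega)]
      push_cast
      ring
    rw [hc]
    obtain ⟨u, rfl⟩ : ∃ u, r = s + u := ⟨r - s, by omega⟩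
    obtain ⟨t, rfl⟩ : ∃ t, s = t + 1 := ⟨s - 1, by omega⟩
    simp only [Nat.add_sub_cancel_left, Nat.add_sub_cancel] at hNsplit ⊢
    rw [hNsplit]
    field_simp
    ring
  · subst hE1
    have hp2 : 2 ≤ p := hp.two_le
    have hsr' : s = r := by
      by_contra h
      have hlt : s < r := lt_of_le_of_ne hsr h
      have := heL ⟨s, hlt⟩ (le_refl s)
      have := he1 ⟨s, hlt⟩
      omega
    have he : ∀ i : Fin r, e i = 1 := fun i => heE i (hsr' ▸ i.isLt)
    have hprod : ∀ k : ℕ, (∏ i, ramanujanSum (p ^ e i) ((k : ℤ) - 1)) =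
        (ramanujanSum (p ^ 1) ((k : ℤ) - 1)) ^ r := by
      intro k
      rw [Finset.prod_congr rfl (fun i _ => by rw [he i]), Finset.prod_const, card_univ,
        Fintype.card_fin]
    have hset : (Icc 1 (p ^ 1)).filter (fun k => Nat.gcd k p = 1) = Icc 1 (p - 1) := by
      ext k
      simp only [mem_filter, mem_Icc, pow_one]
      constructor
      · rintro ⟨⟨h1, h2⟩, h3⟩
        refine ⟨h1, ?_⟩
        rcases eq_or_lt_of_le h2 with rfl | h4
        · rw [Nat.gcd_self] at h3; omega
        · omega
      · rintro ⟨h1, h2⟩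
        refine ⟨⟨h1, by omega⟩, ?_⟩
        have : ¬ p ∣ k := fun hd => absurd (Nat.le_of_dvd (by omega) hd) (by omega)
        exact Nat.coprime_comm.mp (hp.coprime_iff_not_dvd.mpr this)
    rw [hset, Finset.sum_congr rfl (fun k _ => hprod k)]
    have hins : Icc 1 (p - 1) = insert 1 (Icc 2 (p - 1)) := by
      ext k; simp only [mem_Icc, mem_insert]; omega
    rw [hins, Finset.sum_insert (by simp)]
    have h1 : ramanujanSum (p ^ 1) ((1 : ℕ) - 1 : ℤ) = (p : ℤ) - 1 := by
      rw [rs_eq_s16 p 1 hp le_rfl]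
      norm_num
    have h2 : ∀ k ∈ Icc 2 (p - 1), (ramanujanSum (p ^ 1) ((k : ℕ) - 1 : ℤ)) ^ r = (-1 : ℤ) ^ r := by
      intro k hk
      simp only [mem_Icc] at hk
      have hnd : ¬ ((p : ℤ) ^ 1 ∣ (k : ℤ) - 1) := by
        rw [pow_one]
        intro hd
        have := Int.le_of_dvd (by exact_mod_cast (by omega : (0:ℤ) < (k:ℤ) - 1)) hd
        have hkp : (k : ℤ) ≤ (p : ℤ) - 1 := by exact_mod_cast Nat.cast_le.mpr hk.2 |>.trans (by push_cast; omega)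
        omega
      rw [rs_eq_s16 p 1 hp le_rfl, if_neg hnd, if_pos (by simp)]
      norm_num
    rw [Finset.sum_congr rfl h2, Finset.sum_const, Nat.card_Icc, h1, nsmul_eq_mul]
    have : ((p - 1 + 1 - 2 : ℕ) : ℤ) = (p : ℤ) - 2 := by omega
    rw [this]
    ring
end

section
/- For all positive integers m_1,…,m_r, the value R(m_1,…,m_r) = Σ_{1 ≤ k ≤ m, gcd(k,m)=1} c_{m_1}(k−1)···c_{m_r}(k−1) (with m = lcm(m_1,…,m_r)) is a nonnegative integer. -/
open Finset ArithmeticFunction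

open scoped ArithmeticFunction.Moebius ArithmeticFunction.zeta

lemma ramanujanSum_congr {n : ℕ} {a b : ℤ} (h : Int.gcd a n = Int.gcd b n) :
    ramanujanSum n a = ramanujanSum n b := by
  unfold ramanujanSum; rw [h]

lemma int_gcd_dvd_aux {n a b : ℤ} (h : a ≡ b [ZMOD n]) : ((Int.gcd a n : ℤ)) ∣ (Int.gcd b n : ℤ) := by
  refine Int.dvd_coe_gcd ?_ (Int.gcd_dvd_right _ _)
  have h1 : (Int.gcd a n : ℤ) ∣ b - a := dvd_trans (Int.gcd_dvd_right _ _) h.dvd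
  simpa using dvd_add h1 (Int.gcd_dvd_left _ _)

lemma int_gcd_congr {n a b : ℤ} (h : a ≡ b [ZMOD n]) : Int.gcd a n = Int.gcd b n :=
  Nat.dvd_antisymm (Int.natCast_dvd_natCast.mp (int_gcd_dvd_aux h))
    (Int.natCast_dvd_natCast.mp (int_gcd_dvd_aux h.symm))

lemma natModEq_int {n a b : ℕ} (h : a ≡ b [MOD n]) : (a : ℤ) ≡ (b : ℤ) [ZMOD (n : ℤ)] := by
  unfold Int.ModEq
  rw [← Int.natCast_mod, ← Int.natCast_mod]
  exact_mod_cast h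

lemma sum_modEq {ι : Type*} {s : Finset ι} {f g : ι → ℤ} {n : ℤ}
    (h : ∀ j ∈ s, f j ≡ g j [ZMOD n]) : (∑ j ∈ s, f j) ≡ (∑ j ∈ s, g j) [ZMOD n] := by
  classical
  induction s using Finset.induction_on with
  | empty => simp
  | insert x s hx ih =>
    rw [Finset.sum_insert hx, Finset.sum_insert hx]
    exact (h _ (Finset.mem_insert_self _ _)).add (ih fun j hj => h j (Finset.mem_insert_of_mem hj))

lemma zpow_congr_of_primroot {m : ℕ} (hm : m ≠ 0) {z : ℂ} (hζ : IsPrimitiveRoot z m)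
    {a b : ℤ} (h : a ≡ b [ZMOD (m : ℤ)]) : z ^ a = z ^ b := by
  have h0 : z ≠ 0 := hζ.ne_zero hm
  have h1 : z ^ (b - a) = 1 := (hζ.zpow_eq_one_iff_dvd _).mpr h.dvd
  calc z ^ a = z ^ a * z ^ (b - a) := by rw [h1, mul_one]
    _ = z ^ b := by rw [← zpow_add₀ h0]; congr 1; ring

lemma zpow_sum_of_ne_zero {ι : Type*} {z : ℂ} (h0 : z ≠ 0) (s : Finset ι) (f : ι → ℤ) :
    z ^ (∑ j ∈ s, f j) = ∏ j ∈ s, z ^ (f j) := by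
  classical
  induction s using Finset.induction_on with
  | empty => simp
  | insert x s hx ih =>
    rw [Finset.sum_insert hx, Finset.prod_insert hx, zpow_add₀ h0, ih]

lemma charSum_eq {m : ℕ} (hm : m ≠ 0) {z : ℂ} (hζ : IsPrimitiveRoot z m)
    {t : ℕ} (ht : t ≠ 0) (htm : t ∣ m) (c : ℤ) :
    ∑ y ∈ range t, z ^ (((m / t : ℕ) : ℤ) * c * (y : ℕ)) =
      if (t : ℤ) ∣ c then (t : ℂ) else 0 := by
  have h0 : z ≠ 0 := hζ.ne_zero hm
  have hqt : (m / t) * t = m := Nat.div_mul_cancel htm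
  set q : ℤ := ((m / t : ℕ) : ℤ) with hq
  have hq0 : q ≠ 0 := by
    have : 0 < m / t :=
      Nat.div_pos (Nat.le_of_dvd (Nat.pos_of_ne_zero hm) htm) (Nat.pos_of_ne_zero ht)
    simp only [hq, ne_eq, Nat.cast_eq_zero]
    omega
  set rr : ℂ := z ^ (q * c) with hrr
  have hterm : ∀ y : ℕ, z ^ (q * c * (y : ℕ)) = rr ^ y := by
    intro y
    rw [hrr, ← zpow_natCast (z ^ (q * c)) y, ← zpow_mul]
  have hrt : rr ^ t = 1 := by
    rw [hrr, ← zpow_natCast (z ^ (q * c)) t, ← zpow_mul]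
    have hqtm : q * (t : ℤ) = (m : ℤ) := by rw [hq]; exact_mod_cast congrArg (Nat.cast : ℕ → ℤ) hqt
    have : q * c * (t : ℤ) = c * (m : ℤ) := by rw [← hqtm]; ring
    rw [this, mul_comm, zpow_mul, zpow_natCast, hζ.pow_eq_one, one_zpow]
  have hiff : rr = 1 ↔ (t : ℤ) ∣ c := by
    have hmeq : (m : ℤ) = q * t := by rw [hq]; exact_mod_cast hqt.symm
    rw [hrr, hζ.zpow_eq_one_iff_dvd, hmeq]
    exact mul_dvd_mul_iff_left hq0
  rw [Finset.sum_congr rfl (fun y _ => hterm y)]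
  by_cases hr1 : rr = 1
  · simp [hr1, hiff.mp hr1]
  · have hnd : ¬ (t : ℤ) ∣ c := fun hdvd => hr1 (hiff.mpr hdvd)
    rw [geom_sum_eq hr1, hrt, if_neg hnd]
    simp

lemma ramanujanSum_eq_charSum {m : ℕ} (hm : m ≠ 0) {z : ℂ} (hζ : IsPrimitiveRoot z m)
    {n : ℕ} (hn : n ≠ 0) (hnm : n ∣ m) (a : ℤ) :
    (ramanujanSum n a : ℂ) =
      ∑ x ∈ (range n).filter (fun x => Nat.gcd x n = 1),
        z ^ (((m / n : ℕ) : ℤ) * a * (x : ℕ)) := by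
  classical
  have h0 : z ≠ 0 := hζ.ne_zero hm
  set e : ℕ → ℂ := fun x => z ^ (((m / n : ℕ) : ℤ) * a * (x : ℕ)) with he
  have hind : ∀ x : ℕ, (if Nat.gcd x n = 1 then (1 : ℂ) else 0)
      = ∑ d ∈ (Nat.gcd x n).divisors, ((μ d : ℤ) : ℂ) := by
    intro x
    have h1 : ((μ * (ζ : ArithmeticFunction ℤ)) (Nat.gcd x n)) =
        ∑ d ∈ (Nat.gcd x n).divisors, μ d := coe_mul_zeta_apply
    rw [moebius_mul_coe_zeta] at h1
    rw [one_apply] at h1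
    calc (if Nat.gcd x n = 1 then (1 : ℂ) else 0)
        = (((if Nat.gcd x n = 1 then (1 : ℤ) else 0) : ℤ) : ℂ) := by split <;> simp
      _ = _ := by rw [h1]; push_cast; rfl
  have hdivset : ∀ x : ℕ, (Nat.gcd x n).divisors = n.divisors.filter (fun d => d ∣ x) := by
    intro x
    ext d
    simp only [Nat.mem_divisors, Finset.mem_filter, Nat.dvd_gcd_iff]
    constructor
    · rintro ⟨⟨hdx, hdn⟩, -⟩; exact ⟨⟨hdn, hn⟩, hdx⟩
    · rintro ⟨⟨hdn, -⟩, hdx⟩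
      refine ⟨⟨hdx, hdn⟩, ?_⟩
      simp [Nat.gcd_eq_zero_iff, hn]
  have hinner : ∀ d ∈ n.divisors,
      ∑ x ∈ (range n).filter (fun x => d ∣ x), e x
        = if ((n / d : ℕ) : ℤ) ∣ a then ((n / d : ℕ) : ℂ) else 0 := by
    intro d hd
    obtain ⟨hdn, -⟩ := Nat.mem_divisors.mp hd
    have hd0 : 0 < d := Nat.pos_of_mem_divisors hd
    have hstep : ∑ x ∈ (range n).filter (fun x => d ∣ x), e x
        = ∑ y ∈ range (n / d), e (d * y) := by
      refine Finset.sum_nbij' (fun x => x / d) (fun y => d * y) ?_ ?_ ?_ ?_ ?_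
      · intro x hx
        obtain ⟨hxr, hdx⟩ := Finset.mem_filter.mp hx
        rw [Finset.mem_range] at hxr ⊢
        exact Nat.div_lt_div_of_lt_of_dvd hdn hxr
      · intro y hy
        rw [Finset.mem_range] at hy
        refine Finset.mem_filter.mpr ⟨Finset.mem_range.mpr ?_, Dvd.intro y rfl⟩
        have h1 : d * (y + 1) ≤ d * (n / d) := Nat.mul_le_mul_left d (Nat.succ_le_of_lt hy)
        rw [Nat.mul_div_cancel' hdn] at h1
        have h2 : d * y < d * (y + 1) := (Nat.mul_lt_mul_left hd0).mpr (Nat.lt_succ_self y)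
        show d * y < n
        omega
      · intro x hx
        obtain ⟨-, hdx⟩ := Finset.mem_filter.mp hx
        exact Nat.mul_div_cancel' hdx
      · intro y hy
        exact Nat.mul_div_cancel_left y hd0
      · intro x hx
        obtain ⟨-, hdx⟩ := Finset.mem_filter.mp hx
        rw [Nat.mul_div_cancel' hdx]
    rw [hstep]
    have hnd_dvd : n / d ∣ m := dvd_trans (Nat.div_dvd_of_dvd hdn) hnm
    have hnd0 : n / d ≠ 0 := by
      have := Nat.div_pos (Nat.le_of_dvd (Nat.pos_of_ne_zero hn) hdn) hd0
      omega
    have hmq : m / (n / d) = (m / n) * d := by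
      have h1 : m = (m / n) * d * (n / d) := by
        rw [mul_assoc, Nat.mul_div_cancel' hdn, Nat.div_mul_cancel hnm]
      exact Nat.div_eq_of_eq_mul_left (Nat.pos_of_ne_zero hnd0) h1
    have := charSum_eq hm hζ hnd0 hnd_dvd a
    rw [hmq] at this
    rw [← this]
    refine Finset.sum_congr rfl fun y hy => ?_
    rw [he]
    congr 1
    push_cast
    ring
  calc (ramanujanSum n a : ℂ)
      = ∑ d ∈ (Int.gcd a (n : ℤ)).divisors, (d : ℂ) * ((μ (n / d) : ℤ) : ℂ) := by
        unfold ramanujanSum; push_cast; rfl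
    _ = ∑ d ∈ n.divisors.filter (fun d : ℕ => (d : ℤ) ∣ a), (d : ℂ) * ((μ (n / d) : ℤ) : ℂ) := by
        apply Finset.sum_congr _ fun _ _ => rfl
        have hg : Int.gcd a (n : ℤ) = Nat.gcd a.natAbs n := by
          simp [Int.gcd]
        rw [hg]
        ext d
        simp only [Nat.mem_divisors, Finset.mem_filter, Nat.dvd_gcd_iff]
        constructor
        · rintro ⟨⟨hda, hdn⟩, -⟩
          exact ⟨⟨hdn, hn⟩, Int.natCast_dvd.mpr hda⟩
        · rintro ⟨⟨hdn, -⟩, hda⟩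
          refine ⟨⟨Int.natCast_dvd.mp hda, hdn⟩, ?_⟩
          simp [Nat.gcd_eq_zero_iff, hn]
    _ = ∑ d ∈ n.divisors, (if (d : ℤ) ∣ a then (d : ℂ) else 0) * ((μ (n / d) : ℤ) : ℂ) := by
        rw [Finset.sum_filter]
        refine Finset.sum_congr rfl fun d hd => ?_
        by_cases h : (d : ℤ) ∣ a <;> simp [h]
    _ = ∑ d ∈ n.divisors,
          ((μ (n / (n / d)) : ℤ) : ℂ) * (if ((n / d : ℕ) : ℤ) ∣ a then ((n / d : ℕ) : ℂ) else 0) := by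
        refine ((Nat.sum_div_divisors n
          (fun e => (if (e : ℤ) ∣ a then (e : ℂ) else 0) * ((μ (n / e) : ℤ) : ℂ))).symm).trans ?_
        exact Finset.sum_congr rfl fun d hd => mul_comm _ _
    _ = ∑ d ∈ n.divisors, ((μ d : ℤ) : ℂ)
          * ∑ x ∈ (range n).filter (fun x => d ∣ x), e x := by
        refine Finset.sum_congr rfl fun d hd => ?_
        obtain ⟨hdn, -⟩ := Nat.mem_divisors.mp hd
        rw [Nat.div_div_self hdn hn, hinner d hd]
    _ = ∑ d ∈ n.divisors, ∑ x ∈ range n, (if d ∣ x then ((μ d : ℤ) : ℂ) * e x else 0) := by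
        refine Finset.sum_congr rfl fun d hd => ?_
        rw [Finset.mul_sum, Finset.sum_filter]
    _ = ∑ x ∈ range n, (∑ d ∈ n.divisors, (if d ∣ x then ((μ d : ℤ) : ℂ) else 0)) * e x := by
        rw [Finset.sum_comm]
        refine Finset.sum_congr rfl fun x _ => ?_
        rw [Finset.sum_mul]
        refine Finset.sum_congr rfl fun d _ => ?_
        by_cases h : d ∣ x <;> simp [h]
    _ = ∑ x ∈ range n, (if Nat.gcd x n = 1 then (1 : ℂ) else 0) * e x := by
        refine Finset.sum_congr rfl fun x _ => ?_
        rw [hind, hdivset, Finset.sum_filter]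
    _ = ∑ x ∈ (range n).filter (fun x => Nat.gcd x n = 1), e x := by
        rw [Finset.sum_filter]
        refine Finset.sum_congr rfl fun x hx => ?_
        by_cases h : Nat.gcd x n = 1 <;> simp [h]

theorem R_nonneg {r : ℕ} (m : Fin r → ℕ) (hm : ∀ i, 0 < m i) :
    0 ≤ ∑ k ∈ (Icc 1 (Finset.univ.lcm m)).filter
        (fun k => Nat.gcd k (Finset.univ.lcm m) = 1),
      ∏ i, ramanujanSum (m i) ((k : ℤ) - 1) := by
  classical
  set M := Finset.univ.lcm m with hMdef
  have hMdvd : ∀ i, m i ∣ M := fun i => Finset.dvd_lcm (mem_univ i)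
  have hM0 : M ≠ 0 := by
    rw [hMdef]
    simp only [Ne, Finset.lcm_eq_zero_iff]
    intro h
    obtain ⟨i, -, hi⟩ := h
    have := hm i
    omega
  have hMpos : 0 < M := Nat.pos_of_ne_zero hM0
  rcases Nat.lt_or_ge 1 M with h2 | h1
  swap
  · -- M = 1 case
    have hM1 : M = 1 := by omega
    have hmi1 : ∀ i, m i = 1 := fun i => Nat.dvd_one.mp (hM1 ▸ hMdvd i)
    have hr1 : ramanujanSum 1 0 = 1 := by
      unfold ramanujanSum
      norm_num
    rw [hM1]
    rw [Finset.Icc_self]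
    rw [show ({1} : Finset ℕ).filter (fun k => Nat.gcd k 1 = 1) = {1} by
      ext k; simp]
    rw [Finset.sum_singleton]
    simp only [Nat.cast_one, sub_self]
    rw [Finset.prod_congr rfl fun i _ =>
      (show ramanujanSum (m i) 0 = 1 by rw [hmi1 i]; exact hr1)]
    simp
  · -- main case 1 < M
    set z : ℂ := Complex.exp (2 * ↑Real.pi * Complex.I / ↑M) with hzdef
    have hz : IsPrimitiveRoot z M := Complex.isPrimitiveRoot_exp M hM0
    have h0 : z ≠ 0 := hz.ne_zero hM0
    set K : Finset ℕ := (range M).filter (fun k => Nat.gcd k M = 1) with hK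
    have hKeq : (Icc 1 M).filter (fun k => Nat.gcd k M = 1) = K := by
      rw [hK]
      ext k
      simp only [Finset.mem_filter, Finset.mem_Icc, Finset.mem_range]
      constructor
      · rintro ⟨⟨h1k, hkM⟩, hg⟩
        refine ⟨?_, hg⟩
        rcases eq_or_lt_of_le hkM with rfl | h
        · rw [Nat.gcd_self] at hg; omega
        · exact h
      · rintro ⟨hk, hg⟩
        refine ⟨⟨?_, le_of_lt hk⟩, hg⟩
        rcases Nat.eq_zero_or_pos k with rfl | h
        · rw [Nat.gcd_zero_left] at hg; omega
        · exact h
    rw [hKeq]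
    set T := Fintype.piFinset (fun i => (range (m i)).filter (fun x : ℕ => Nat.gcd x (m i) = 1)) with hT
    set S : (Fin r → ℕ) → ℕ := fun x => ∑ i, (M / m i) * x i with hSdef
    set R : ℤ := ∑ k ∈ K, ∏ i, ramanujanSum (m i) ((k : ℤ) - 1) with hR
    -- Step 1: R as a double character sum
    have hE1 : (R : ℂ) = ∑ x ∈ T, z ^ (-(S x : ℤ)) * (ramanujanSum M ((S x : ℕ) : ℤ) : ℂ) := by
      rw [hR]
      calc ((∑ k ∈ K, ∏ i, ramanujanSum (m i) ((k : ℤ) - 1) : ℤ) : ℂ)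
          = ∑ k ∈ K, ∏ i, (ramanujanSum (m i) ((k : ℤ) - 1) : ℂ) := by push_cast; rfl
        _ = ∑ k ∈ K, ∏ i, ∑ x ∈ (range (m i)).filter (fun x : ℕ => Nat.gcd x (m i) = 1),
              z ^ (((M / m i : ℕ) : ℤ) * ((k : ℤ) - 1) * (x : ℕ)) := by
            refine Finset.sum_congr rfl fun k _ => Finset.prod_congr rfl fun i _ => ?_
            exact ramanujanSum_eq_charSum hM0 hz (hm i).ne' (hMdvd i) _
        _ = ∑ k ∈ K, ∑ x ∈ T, ∏ i, z ^ (((M / m i : ℕ) : ℤ) * ((k : ℤ) - 1) * (x i : ℕ)) := by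
            refine Finset.sum_congr rfl fun k _ => ?_
            rw [hT]
            exact Finset.prod_univ_sum _ _
        _ = ∑ k ∈ K, ∑ x ∈ T, z ^ (((k : ℤ) - 1) * (S x : ℤ)) := by
            refine Finset.sum_congr rfl fun k _ => Finset.sum_congr rfl fun x _ => ?_
            rw [← zpow_sum_of_ne_zero h0]
            congr 1
            simp only [hSdef]
            push_cast
            rw [Finset.mul_sum]
            exact Finset.sum_congr rfl fun i _ => by ring
        _ = ∑ x ∈ T, ∑ k ∈ K, z ^ (((k : ℤ) - 1) * (S x : ℤ)) := Finset.sum_comm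
        _ = ∑ x ∈ T, z ^ (-(S x : ℤ)) * (ramanujanSum M ((S x : ℕ) : ℤ) : ℂ) := by
            refine Finset.sum_congr rfl fun x _ => ?_
            have hsplit : ∀ k : ℕ, z ^ (((k : ℤ) - 1) * (S x : ℤ))
                = z ^ (-(S x : ℤ)) * z ^ (((M / M : ℕ) : ℤ) * ((S x : ℕ) : ℤ) * (k : ℕ)) := by
              intro k
              rw [← zpow_add₀ h0]
              congr 1
              rw [Nat.div_self hMpos]
              push_cast
              ring
            rw [Finset.sum_congr rfl fun k _ => hsplit k, ← Finset.mul_sum]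
            congr 1
            have hstep := ramanujanSum_eq_charSum hM0 hz hM0 dvd_rfl ((S x : ℕ) : ℤ)
            rw [hstep, hK]
    -- Step 2: averaging over units
    have hBij : ∀ u : ℕ, Nat.gcd u M = 1 →
        ∑ x ∈ T, z ^ (-(S x : ℤ)) * (ramanujanSum M ((S x : ℕ) : ℤ) : ℂ)
          = ∑ x ∈ T, z ^ (-(u : ℤ) * (S x : ℤ)) * (ramanujanSum M ((S x : ℕ) : ℤ) : ℂ) := by
      intro u hu
      obtain ⟨v, -, hv⟩ := Nat.exists_mul_mod_eq_one_of_coprime hu h2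
      have huv : u * v ≡ 1 [MOD M] := by
        show u * v % M = 1 % M
        rw [Nat.mod_eq_of_lt h2]
        exact hv
      have hvM : Nat.Coprime v M := by
        have h3 : Nat.gcd (u * v) M = 1 := by
          rw [Nat.gcd_comm, Nat.gcd_rec]
          show Nat.gcd (u * v % M) M = 1
          rw [hv]
          exact Nat.gcd_one_left M
        exact Nat.Coprime.coprime_dvd_left (dvd_mul_left v u) h3
      have hmemT : ∀ (w : ℕ), Nat.Coprime w M → ∀ x ∈ T, (fun j => (w * x j) % m j) ∈ T := by
        intro w hw x hx
        rw [hT] at hx ⊢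
        refine Fintype.mem_piFinset.mpr fun j => ?_
        have hxj := Fintype.mem_piFinset.mp hx j
        obtain ⟨hxr, hxg⟩ := Finset.mem_filter.mp hxj
        refine Finset.mem_filter.mpr ⟨Finset.mem_range.mpr (Nat.mod_lt _ (hm j)), ?_⟩
        have hgcd : Nat.gcd ((w * x j) % m j) (m j) = Nat.gcd (w * x j) (m j) := by
          rw [← Nat.gcd_rec]
          exact Nat.gcd_comm _ _
        rw [hgcd]
        exact Nat.Coprime.mul (Nat.Coprime.coprime_dvd_right (hMdvd j) hw) hxg
      have hinv : ∀ (a b : ℕ), a * b ≡ 1 [MOD M] → ∀ x ∈ T,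
          (fun j => (b * ((a * x j) % m j) % m j)) = x := by
        intro a b hab x hx
        funext j
        rw [hT] at hx
        have hxj := Fintype.mem_piFinset.mp hx j
        obtain ⟨hxr, hxg⟩ := Finset.mem_filter.mp hxj
        have habj : a * b ≡ 1 [MOD m j] := Nat.ModEq.of_dvd (hMdvd j) hab
        have hmod : b * ((a * x j) % m j) ≡ x j [MOD m j] := by
          calc b * ((a * x j) % m j) ≡ b * (a * x j) [MOD m j] :=
                Nat.ModEq.mul_left b (Nat.mod_modEq _ _)
            _ = (a * b) * x j := by ring
            _ ≡ 1 * x j [MOD m j] := Nat.ModEq.mul_right _ habj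
            _ = x j := one_mul _
        simpa [Nat.ModEq, Nat.mod_eq_of_lt (Finset.mem_range.mp hxr)] using hmod
      have hvu : v * u ≡ 1 [MOD M] := by rwa [mul_comm] at huv
      refine (Finset.sum_nbij' (fun x j => (u * x j) % m j) (fun y j => (v * y j) % m j)
        (fun x hx => hmemT u hu x hx) (fun y hy => hmemT v hvM y hy)
        (fun x hx => hinv u v huv x hx) (fun y hy => hinv v u hvu y hy) ?_).symm
      intro x hx
      -- value equality
      have hSx' : ((S (fun j => (u * x j) % m j) : ℕ) : ℤ) ≡ (u : ℤ) * ((S x : ℕ) : ℤ) [ZMOD ((M : ℕ) : ℤ)] := by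
        have hterm : ∀ j : Fin r, (((M / m j : ℕ) : ℤ) * (((u * x j) % m j : ℕ) : ℤ))
            ≡ ((M / m j : ℕ) : ℤ) * ((u : ℤ) * ((x j : ℕ) : ℤ)) [ZMOD ((M : ℕ) : ℤ)] := by
          intro j
          have h1 : (((u * x j) % m j : ℕ) : ℤ) ≡ ((u * x j : ℕ) : ℤ) [ZMOD ((m j : ℕ) : ℤ)] :=
            natModEq_int (Nat.mod_modEq _ _)
          have h2 := h1.mul_left' (c := ((M / m j : ℕ) : ℤ))
          have h3 : ((M / m j : ℕ) : ℤ) * ((m j : ℕ) : ℤ) = ((M : ℕ) : ℤ) := by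
            exact_mod_cast congrArg (Nat.cast : ℕ → ℤ) (Nat.div_mul_cancel (hMdvd j))
          rw [h3] at h2
          have h4 : ((u * x j : ℕ) : ℤ) = (u : ℤ) * ((x j : ℕ) : ℤ) := by push_cast; ring
          rwa [h4] at h2
        calc ((S (fun j => (u * x j) % m j) : ℕ) : ℤ)
            = ∑ j, ((M / m j : ℕ) : ℤ) * (((u * x j) % m j : ℕ) : ℤ) := by
              simp only [hSdef]; push_cast; rfl
          _ ≡ ∑ j, ((M / m j : ℕ) : ℤ) * ((u : ℤ) * ((x j : ℕ) : ℤ)) [ZMOD ((M : ℕ) : ℤ)] :=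
              sum_modEq fun j _ => hterm j
          _ = (u : ℤ) * ((S x : ℕ) : ℤ) := by
              simp only [hSdef]
              push_cast
              rw [Finset.mul_sum]
              exact Finset.sum_congr rfl fun j _ => by ring
      have hz1 : z ^ (-(u : ℤ) * ((S x : ℕ) : ℤ)) = z ^ (-(S ((fun j => (u * x j) % m j)) : ℤ)) := by
        apply zpow_congr_of_primroot hM0 hz
        have hneg := hSx'.symm.neg
        calc -(u : ℤ) * ((S x : ℕ) : ℤ) = -((u : ℤ) * ((S x : ℕ) : ℤ)) := by ring
          _ ≡ -((S (fun j => (u * x j) % m j) : ℕ) : ℤ) [ZMOD ((M : ℕ) : ℤ)] := hneg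
      have hc : ramanujanSum M ((S (fun j => (u * x j) % m j) : ℕ) : ℤ)
          = ramanujanSum M ((S x : ℕ) : ℤ) := by
        apply ramanujanSum_congr
        have e1 := int_gcd_congr hSx'
        have e2 : Int.gcd ((u : ℤ) * ((S x : ℕ) : ℤ)) ((M : ℕ) : ℤ)
            = Int.gcd ((S x : ℕ) : ℤ) ((M : ℕ) : ℤ) := by
          have h5 : (u : ℤ) * ((S x : ℕ) : ℤ) = ((u * S x : ℕ) : ℤ) := by push_cast; ring
          rw [h5, Int.gcd_natCast_natCast, Int.gcd_natCast_natCast]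
          exact Nat.Coprime.gcd_mul_left_cancel _ hu
        exact e1.trans e2
      rw [hz1, hc]
    have h1K : (1 : ℕ) ∈ K := by
      rw [hK]; exact Finset.mem_filter.mpr ⟨Finset.mem_range.mpr h2, Nat.gcd_one_left M⟩
    have hcard : 0 < K.card := Finset.card_pos.mpr ⟨1, h1K⟩
    have hfinal : ((K.card : ℕ) : ℂ) * (R : ℂ)
        = ∑ x ∈ T, ((ramanujanSum M ((S x : ℕ) : ℤ) : ℤ) : ℂ) ^ 2 := by
      calc ((K.card : ℕ) : ℂ) * (R : ℂ) = ∑ _u ∈ K, (R : ℂ) := by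
            rw [Finset.sum_const, nsmul_eq_mul]
        _ = ∑ u ∈ K, ∑ x ∈ T, z ^ (-(u : ℤ) * (S x : ℤ)) * (ramanujanSum M ((S x : ℕ) : ℤ) : ℂ) := by
            refine Finset.sum_congr rfl fun u hu => ?_
            rw [hE1]
            have hu' : Nat.gcd u M = 1 := by
              have := Finset.mem_filter.mp (hK ▸ hu)
              exact this.2
            exact hBij u hu'
        _ = ∑ x ∈ T, ∑ u ∈ K, z ^ (-(u : ℤ) * (S x : ℤ)) * (ramanujanSum M ((S x : ℕ) : ℤ) : ℂ) :=
            Finset.sum_comm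
        _ = ∑ x ∈ T, (ramanujanSum M (-((S x : ℕ) : ℤ)) : ℂ) * (ramanujanSum M ((S x : ℕ) : ℤ) : ℂ) := by
            refine Finset.sum_congr rfl fun x _ => ?_
            rw [← Finset.sum_mul]
            congr 1
            have hstep := ramanujanSum_eq_charSum hM0 hz hM0 dvd_rfl (-((S x : ℕ) : ℤ))
            rw [hstep, hK]
            refine Finset.sum_congr rfl fun u _ => ?_
            congr 1
            rw [Nat.div_self hMpos]
            push_cast
            ring
        _ = ∑ x ∈ T, ((ramanujanSum M ((S x : ℕ) : ℤ) : ℤ) : ℂ) ^ 2 := by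
            refine Finset.sum_congr rfl fun x _ => ?_
            rw [ramanujanSum_congr (show Int.gcd (-((S x : ℕ) : ℤ)) ((M : ℕ) : ℤ)
              = Int.gcd ((S x : ℕ) : ℤ) ((M : ℕ) : ℤ) from Int.neg_gcd), sq]
    have hZ : (K.card : ℤ) * R = ∑ x ∈ T, (ramanujanSum M ((S x : ℕ) : ℤ)) ^ 2 := by
      have h' : (((K.card : ℤ) * R : ℤ) : ℂ)
          = ((∑ x ∈ T, (ramanujanSum M ((S x : ℕ) : ℤ)) ^ 2 : ℤ) : ℂ) := by
        push_cast
        push_cast at hfinal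
        exact hfinal
      exact_mod_cast h'
    have hs : 0 ≤ ∑ x ∈ T, (ramanujanSum M ((S x : ℕ) : ℤ)) ^ 2 :=
      Finset.sum_nonneg fun x _ => sq_nonneg _
    have hKc : (0 : ℤ) < (K.card : ℤ) := by exact_mod_cast hcard
    have : (0 : ℤ) ≤ (K.card : ℤ) * R := hZ ▸ hs
    exact (mul_nonneg_iff_of_pos_left hKc).mp this
end
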